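/- arXiv:1707.04998 — 5 statements merged into one kernel-verified Lean document; each statement's English description precedes it below -/
import Mathlib

section
/- Let X be a non-negative random variable with continuous distribution function F, finite positive mean μ, and quantile function F⁻¹(p) = inf{x ≥ 0 : F(x) ≥ p}. Define the Lorenz curve L(p) = (1/μ) ∫_0^{F⁻¹(p)} t dF(t) for p ∈ (0,1). Then the Gini index G = 1 − 2 ∫_0^1 L(p) dp satisfies G = (2/μ) Cov(X, F(X)). -/
open MeasureTheory ProbabilityTheory

/-- For a non-negative random variable `X` with continuous distribution
function `F` and finite positive mean `μ`, the Gini index, defined as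
`G = 1 − 2∫₀¹ L(p) dp` where `L` is the Lorenz curve
`L(p) = (1/μ) ∫_0^{F⁻¹(p)} t dF(t)`, satisfies `G = (2/μ) Cov(X, F(X))`. -/
theorem gini_eq_two_cov_div_mean {Ω : Type*} [MeasurableSpace Ω] (P : Measure Ω)
    [IsProbabilityMeasure P] (X : Ω → ℝ) (hm : Measurable X)
    (hpos : ∀ ω, 0 ≤ X ω) (hint : Integrable X P)
    (μ : ℝ) (hμ : μ = ∫ ω, X ω ∂P) (hμpos : 0 < μ)
    (F : ℝ → ℝ) (hF : ∀ x, F x = (P.map X (Set.Iic x)).toReal)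
    (hFcont : Continuous F)
    (Finv : ℝ → ℝ) (hFinv : ∀ p, Finv p = sInf {x : ℝ | 0 ≤ x ∧ p ≤ F x})
    (L : ℝ → ℝ) (hL : ∀ p, L p = (1 / μ) * ∫ t in Set.Iic (Finv p), t ∂(P.map X))
    (G : ℝ) (hG : G = 1 - 2 * ∫ p in (0:ℝ)..1, L p) :
    G = (2 / μ) * ((∫ ω, X ω * F (X ω) ∂P) - μ * (∫ ω, F (X ω) ∂P)) := by
  classical
  set ν := P.map X with hνdef
  have hXae : AEMeasurable X P := hm.aemeasurable
  have hprob : IsProbabilityMeasure ν := Measure.isProbabilityMeasure_map hXae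
  have hFmeas : Measurable F := hFcont.measurable
  have hIic_ne_top : ∀ x, ν (Set.Iic x) ≠ ⊤ := fun x => (measure_lt_top ν _).ne
  have hFofReal : ∀ x, ENNReal.ofReal (F x) = ν (Set.Iic x) := by
    intro x; rw [hF x, ENNReal.ofReal_toReal (hIic_ne_top x)]
  have hF0 : ∀ x, 0 ≤ F x := fun x => by rw [hF x]; exact ENNReal.toReal_nonneg
  have hF1 : ∀ x, F x ≤ 1 := by
    intro x
    rw [hF x]
    exact ENNReal.toReal_le_of_le_ofReal zero_le_one (by simpa using prob_le_one (μ := ν))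
  have hFmono : Monotone F := by
    intro a b hab
    rw [hF a, hF b]
    exact ENNReal.toReal_mono (hIic_ne_top b)
      (measure_mono (Set.Iic_subset_Iic.2 hab))
  -- ν gives no mass to negatives
  have hae_nonneg : ∀ᵐ t ∂ν, 0 ≤ t := by
    rw [hνdef, MeasureTheory.ae_map_iff hXae measurableSet_Ici]
    exact Filter.Eventually.of_forall hpos
  have hIio0 : ν (Set.Iio 0) = 0 := by
    have := hae_nonneg
    rw [MeasureTheory.ae_iff] at this
    simpa [Set.Iio, not_le] using this
  -- no atoms
  have hatom : ∀ x : ℝ, ν {x} = 0 := by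
    intro x
    have hxseq : Filter.Tendsto (fun n : ℕ => x - 1 / (n + 1)) Filter.atTop (nhds x) := by
      have : Filter.Tendsto (fun n : ℕ => 1 / ((n : ℝ) + 1)) Filter.atTop (nhds 0) :=
        tendsto_one_div_add_atTop_nhds_zero_nat
      simpa using (tendsto_const_nhds (x := x)).sub this
    have hmono : Monotone (fun n : ℕ => Set.Iic (x - 1 / (n + 1))) := by
      intro a b hab
      apply Set.Iic_subset_Iic.2
      have : (1 : ℝ) / (b + 1) ≤ 1 / (a + 1) := by
        apply one_div_le_one_div_of_le (by positivity)
        exact_mod_cast by exact_mod_cast add_le_add_left (Nat.cast_le.2 hab) 1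
      linarith
    have hUnion : (⋃ n : ℕ, Set.Iic (x - 1 / (n + 1))) = Set.Iio x := by
      ext y
      simp only [Set.mem_iUnion, Set.mem_Iic, Set.mem_Iio]
      constructor
      · rintro ⟨n, hn⟩
        have : (0:ℝ) < 1 / (n + 1) := by positivity
        linarith
      · intro hy
        obtain ⟨n, hn⟩ := exists_nat_one_div_lt (sub_pos.2 hy)
        exact ⟨n, by linarith⟩
    have t1 : Filter.Tendsto (fun n : ℕ => ν (Set.Iic (x - 1 / (n + 1)))) Filter.atTop
        (nhds (ν (Set.Iio x))) := by
      rw [← hUnion]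
      exact tendsto_measure_iUnion_atTop hmono
    have t2 : Filter.Tendsto (fun n : ℕ => ν (Set.Iic (x - 1 / (n + 1)))) Filter.atTop
        (nhds (ENNReal.ofReal (F x))) := by
      simp_rw [← hFofReal]
      exact (ENNReal.continuous_ofReal.tendsto _).comp ((hFcont.tendsto x).comp hxseq)
    have hIio : ν (Set.Iio x) = ν (Set.Iic x) := by
      rw [tendsto_nhds_unique t1 t2, hFofReal]
    have hdisj : Disjoint (Set.Iio x) {x} := by
      exact Set.disjoint_singleton_right.2 (by simp)
    have hsplit : ν (Set.Iic x) = ν (Set.Iio x) + ν {x} := by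
      rw [← Set.Iio_union_right, measure_union hdisj (measurableSet_singleton x)]
    have h0 : ν (Set.Iio x) + 0 = ν (Set.Iio x) + ν {x} := by
      rw [add_zero, ← hsplit]; exact hIio
    exact ((ENNReal.add_right_inj (measure_lt_top ν _).ne).1 h0).symm
  have hIic0 : ν (Set.Iic 0) = 0 := by
    have : ν (Set.Iic 0) ≤ ν (Set.Iio 0) + ν {0} := by
      apply le_trans (measure_mono ?_) (measure_union_le _ _)
      intro y hy
      rcases lt_or_eq_of_le (Set.mem_Iic.1 hy) with h | h
      · exact Or.inl h
      · exact Or.inr h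
    simpa [hIio0, hatom 0] using this
  -- F t = 0 for t ≤ 0
  have hFneg : ∀ t ≤ (0:ℝ), F t = 0 := by
    intro t ht
    have h1 : ν (Set.Iic t) ≤ ν (Set.Iic 0) := measure_mono (Set.Iic_subset_Iic.2 ht)
    rw [hF t]
    simp [le_antisymm (hIic0 ▸ h1) zero_le]
  -- F tends to 1 at infinity
  have hFtop : Filter.Tendsto F Filter.atTop (nhds 1) := by
    have h1 : Filter.Tendsto (fun x => ν (Set.Iic x)) Filter.atTop (nhds (ν Set.univ)) :=
      tendsto_measure_Iic_atTop ν
    have h2 : Filter.Tendsto (fun x => (ν (Set.Iic x)).toReal) Filter.atTop (nhds 1) := by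
      simpa [Function.comp_def] using (ENNReal.tendsto_toReal (by simp : ν Set.univ ≠ ⊤)).comp h1
    exact h2.congr fun x => (hF x).symm
  -- level sets of F are ν-null
  have hlevel : ∀ p : ℝ, 0 < p → p < 1 → ν {t | F t = p} = 0 := by
    intro p hp hlt
    set C := {t : ℝ | F t = p} with hC
    rcases Set.eq_empty_or_nonempty C with hCe | hCne
    · simp [hCe]
    have hCpos : ∀ t ∈ C, 0 < t := by
      intro t ht
      by_contra h
      push_neg at h
      have h1 : F t = p := ht
      rw [hFneg t h] at h1
      exact absurd h1.symm (ne_of_gt hp)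
    have hBddBelow : BddBelow C := ⟨0, fun t ht => (hCpos t ht).le⟩
    have hBddAbove : BddAbove C := by
      obtain ⟨M, hM⟩ : ∃ M, p < F M := by
        have := hFtop.eventually (eventually_gt_nhds hlt)
        exact this.exists
      exact ⟨M, fun t ht => by
        by_contra h
        push_neg at h
        have h2 : F M ≤ F t := hFmono h.le
        rw [show F t = p from ht] at h2
        exact absurd hM (not_lt.2 h2)⟩
    have hclosed : IsClosed C := isClosed_eq hFcont continuous_const
    set a := sInf C
    set b := sSup C
    have ha : a ∈ C := hclosed.csInf_mem hCne hBddBelow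
    have hb : b ∈ C := hclosed.csSup_mem hCne hBddAbove
    have hab : a ≤ b := csInf_le_csSup hCne hBddBelow hBddAbove
    have hsub : C ⊆ Set.Icc a b := fun t ht => ⟨csInf_le hBddBelow ht, le_csSup hBddAbove ht⟩
    have hIoc : ν (Set.Ioc a b) = 0 := by
      have hdiff : Set.Ioc a b = Set.Iic b \ Set.Iic a := by
        ext y; simp only [Set.mem_Ioc, Set.mem_diff, Set.mem_Iic, not_le]; tauto
      rw [hdiff, measure_diff (Set.Iic_subset_Iic.2 hab) measurableSet_Iic.nullMeasurableSet
        (hIic_ne_top a), ← hFofReal, ← hFofReal, show F a = p from ha, show F b = p from hb,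
        tsub_self]
    refine le_antisymm ?_ zero_le
    calc ν C ≤ ν (Set.Icc a b) := measure_mono hsub
      _ ≤ ν ({a} ∪ Set.Ioc a b) := measure_mono (by
          intro y hy
          rcases eq_or_lt_of_le hy.1 with h | h
          · exact Or.inl (by simp [← h])
          · exact Or.inr ⟨h, hy.2⟩)
      _ ≤ ν {a} + ν (Set.Ioc a b) := measure_union_le _ _
      _ = 0 := by rw [hatom a, hIoc, zero_add]
  -- Finv facts
  have hSbdd : ∀ p : ℝ, BddBelow {x : ℝ | 0 ≤ x ∧ p ≤ F x} := fun p => ⟨0, fun x hx => hx.1⟩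
  have hSne : ∀ p : ℝ, p < 1 → {x : ℝ | 0 ≤ x ∧ p ≤ F x}.Nonempty := by
    intro p hp
    have h1 := hFtop.eventually (eventually_gt_nhds hp)
    have h2 : ∀ᶠ x : ℝ in Filter.atTop, (0:ℝ) ≤ x := Filter.eventually_ge_atTop 0
    obtain ⟨x, hx1, hx2⟩ := (h1.and h2).exists
    exact ⟨x, hx2, hx1.le⟩
  have hkey1 : ∀ p : ℝ, p < 1 → ∀ t : ℝ, F t < p → t ≤ Finv p := by
    intro p hp t ht
    rw [hFinv p]
    refine le_csInf (hSne p hp) fun x hx => ?_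
    by_contra h
    push_neg at h
    exact absurd (le_trans hx.2 (hFmono h.le)) (not_le.2 ht)
  have hkey2 : ∀ p t : ℝ, 0 < t → p < F t → Finv p < t := by
    intro p t ht hpt
    have h1 : ∀ᶠ y in nhdsWithin t (Set.Iio t), p < F y :=
      nhdsWithin_le_nhds ((hFcont.tendsto t).eventually (eventually_gt_nhds hpt))
    have h2 : ∀ᶠ y in nhdsWithin t (Set.Iio t), 0 < y :=
      nhdsWithin_le_nhds (eventually_gt_nhds ht)
    have h3 : ∀ᶠ y in nhdsWithin t (Set.Iio t), y < t := eventually_mem_nhdsWithin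
    obtain ⟨y, hy1, hy2, hy3⟩ := (h1.and (h2.and h3)).exists
    calc Finv p ≤ y := by
          rw [hFinv p]; exact csInf_le (hSbdd p) ⟨hy2.le, hy1.le⟩
      _ < t := hy3
  -- a.e. identification of the integration region
  have hsetae : ∀ p ∈ Set.Ioo (0:ℝ) 1,
      (Set.Iic (Finv p) : Set ℝ) =ᵐ[ν] F ⁻¹' Set.Iic p := by
    intro p hp
    have hnull : ν (Set.Iic 0 ∪ {t | F t = p}) = 0 :=
      measure_union_null hIic0 (hlevel p hp.1 hp.2)
    have hae := measure_eq_zero_iff_ae_notMem.1 hnull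
    rw [Filter.eventuallyEq_set]
    filter_upwards [hae] with t ht
    simp only [Set.mem_union, Set.mem_Iic, Set.mem_setOf_eq, not_or] at ht
    obtain ⟨ht0, htp⟩ := ht
    push_neg at ht0
    simp only [Set.mem_Iic, Set.mem_preimage]
    constructor
    · intro h
      by_contra hc
      push_neg at hc
      exact absurd h (not_le.2 (hkey2 p t ht0 hc))
    · intro h
      exact hkey1 p hp.2 t (lt_of_le_of_ne h htp)
  -- The product set and double integral machinery
  set S : Set (ℝ × ℝ) := {q : ℝ × ℝ | F q.2 ≤ q.1} with hSdef
  have hSmeas : MeasurableSet S := measurableSet_le (hFmeas.comp measurable_snd) measurable_fst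
  have hHmeas : Measurable (S.indicator fun q : ℝ × ℝ => ENNReal.ofReal q.2) :=
    (ENNReal.measurable_ofReal.comp measurable_snd).indicator hSmeas
  have hlint_fin : ∫⁻ t, ENNReal.ofReal t ∂ν < ⊤ := by
    rw [hνdef, lintegral_map ENNReal.measurable_ofReal hm]
    calc ∫⁻ ω, ENNReal.ofReal (X ω) ∂P ≤ ∫⁻ ω, (‖X ω‖₊ : ENNReal) ∂P :=
          lintegral_mono fun ω => (Real.enorm_eq_ofReal (hpos ω)).ge
      _ < ⊤ := hint.2
  set f : ℝ → ENNReal :=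
    fun p => ∫⁻ t, S.indicator (fun q : ℝ × ℝ => ENNReal.ofReal q.2) (p, t) ∂ν with hfdef
  have hfmeas : Measurable f := hHmeas.lintegral_prod_right'
  have hf_fin : ∀ p, f p < ⊤ := by
    intro p
    refine lt_of_le_of_lt (lintegral_mono fun t => ?_) hlint_fin
    by_cases h : (p, t) ∈ S
    · rw [Set.indicator_of_mem h]
    · rw [Set.indicator_of_notMem h]; exact zero_le
  have hg : ∀ p : ℝ, ∫ t in F ⁻¹' Set.Iic p, t ∂ν = (f p).toReal := by
    intro p
    have hmeasset : MeasurableSet (F ⁻¹' Set.Iic p) := hFmeas measurableSet_Iic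
    rw [integral_eq_lintegral_of_nonneg_ae (ae_restrict_of_ae hae_nonneg)
      aestronglyMeasurable_id]
    congr 1
    rw [← lintegral_indicator hmeasset]
    apply lintegral_congr
    intro t
    by_cases h : F t ≤ p
    · rw [Set.indicator_of_mem (by exact h), Set.indicator_of_mem (by exact h)]
    · rw [Set.indicator_of_notMem (by exact h), Set.indicator_of_notMem (by exact h)]
  -- volume computation
  have hvol : ∀ a : ℝ, 0 ≤ a →
      volume (Set.Ici a ∩ Set.Ioo (0:ℝ) 1) = ENNReal.ofReal (1 - a) := by
    intro a ha
    apply le_antisymm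
    · calc volume (Set.Ici a ∩ Set.Ioo (0:ℝ) 1) ≤ volume (Set.Ico a 1) :=
            measure_mono (fun x hx => ⟨hx.1, hx.2.2⟩)
        _ = ENNReal.ofReal (1 - a) := Real.volume_Ico
    · calc ENNReal.ofReal (1 - a) = volume (Set.Ioo a 1) := Real.volume_Ioo.symm
        _ ≤ volume (Set.Ici a ∩ Set.Ioo (0:ℝ) 1) :=
            measure_mono (fun x hx => ⟨hx.1.le, lt_of_le_of_lt ha hx.1, hx.2⟩)
  -- Tonelli
  have hR : ∫⁻ p in Set.Ioo (0:ℝ) 1, f p ∂volume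
      = ∫⁻ t, ENNReal.ofReal (t * (1 - F t)) ∂ν := by
    have hsw := lintegral_lintegral_swap (μ := volume.restrict (Set.Ioo (0:ℝ) 1)) (ν := ν)
      (f := fun p t => S.indicator (fun q : ℝ × ℝ => ENNReal.ofReal q.2) (p, t))
      hHmeas.aemeasurable
    refine hsw.trans ?_
    refine lintegral_congr_ae (hae_nonneg.mono fun t ht => ?_)
    have h1 : ∀ p : ℝ, S.indicator (fun q : ℝ × ℝ => ENNReal.ofReal q.2) (p, t)
        = (Set.Ici (F t)).indicator (fun _ => ENNReal.ofReal t) p := by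
      intro p
      by_cases h : F t ≤ p
      · rw [Set.indicator_of_mem (by exact h), Set.indicator_of_mem (by exact h)]
      · rw [Set.indicator_of_notMem (by exact h), Set.indicator_of_notMem (by exact h)]
    calc ∫⁻ p in Set.Ioo (0:ℝ) 1,
            S.indicator (fun q : ℝ × ℝ => ENNReal.ofReal q.2) (p, t) ∂volume
        = ∫⁻ p in Set.Ioo (0:ℝ) 1,
            (Set.Ici (F t)).indicator (fun _ => ENNReal.ofReal t) p ∂volume :=
          lintegral_congr h1
      _ = ENNReal.ofReal t * (volume.restrict (Set.Ioo (0:ℝ) 1)) (Set.Ici (F t)) :=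
          lintegral_indicator_const measurableSet_Ici _
      _ = ENNReal.ofReal (t * (1 - F t)) := by
          rw [Measure.restrict_apply measurableSet_Ici, hvol (F t) (hF0 t),
            ← ENNReal.ofReal_mul ht]
  have hnonneg_sub : ∀ᵐ t ∂ν, 0 ≤ t * (1 - F t) :=
    hae_nonneg.mono fun t ht => mul_nonneg ht (by linarith [hF1 t])
  have key : ∫ p in Set.Ioo (0:ℝ) 1, (f p).toReal = ∫ t, t * (1 - F t) ∂ν := by
    rw [integral_toReal hfmeas.aemeasurable (Filter.Eventually.of_forall hf_fin), hR,
      ← integral_eq_lintegral_of_nonneg_ae hnonneg_sub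
        (measurable_id.mul (measurable_const.sub hFmeas)).aestronglyMeasurable]
  -- integrability
  have hint_id : Integrable (fun t : ℝ => t) ν := by
    rw [hνdef]
    exact (integrable_map_measure aestronglyMeasurable_id hXae).2 hint
  have hint_mul : Integrable (fun t : ℝ => t * F t) ν := by
    have h1 := hint_id.bdd_mul (c := 1) hFmeas.aestronglyMeasurable
      (Filter.Eventually.of_forall fun x => by rw [Real.norm_eq_abs, abs_of_nonneg (hF0 x)]; exact hF1 x)
    simpa [mul_comm] using h1
  have hsub_int : ∫ t, t * (1 - F t) ∂ν = (∫ t, t ∂ν) - ∫ t, t * F t ∂ν := by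
    rw [← integral_sub hint_id hint_mul]
    congr 1
    ext t
    ring
  -- transfer integrals
  have hI1 : ∫ t, t ∂ν = μ := by
    rw [hμ, hνdef]
    exact integral_map (f := fun t : ℝ => t) hXae measurable_id.aestronglyMeasurable
  have hI2 : ∫ t, t * F t ∂ν = ∫ ω, X ω * F (X ω) ∂P := by
    rw [hνdef]
    exact integral_map (f := fun t : ℝ => t * F t) hXae
      (measurable_id.mul hFmeas).aestronglyMeasurable
  -- E[F(X)] = 1/2
  have hJ : ∫ ω, F (X ω) ∂P = 1 / 2 := by
    set s1 : Set (ℝ × ℝ) := {q : ℝ × ℝ | q.2 ≤ q.1} with hs1def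
    set s2 : Set (ℝ × ℝ) := {q : ℝ × ℝ | q.1 ≤ q.2} with hs2def
    have hs1 : MeasurableSet s1 := measurableSet_le measurable_snd measurable_fst
    have hs2 : MeasurableSet s2 := measurableSet_le measurable_fst measurable_snd
    have hswap : (ν.prod ν) s2 = (ν.prod ν) s1 := by
      conv_lhs => rw [← Measure.prod_swap]
      rw [Measure.map_apply measurable_swap hs2]
      rfl
    have hdiag : (ν.prod ν) (s1 ∩ s2) = 0 := by
      rw [Measure.prod_apply (hs1.inter hs2)]
      have h0 : ∀ x : ℝ, ν (Prod.mk x ⁻¹' (s1 ∩ s2)) = 0 := by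
        intro x
        have he : Prod.mk x ⁻¹' (s1 ∩ s2) = {x} := by
          ext y
          simp only [Set.mem_preimage, Set.mem_inter_iff, Set.mem_singleton_iff, hs1def,
            hs2def, Set.mem_setOf_eq]
          constructor
          · rintro ⟨h1, h2⟩; exact le_antisymm h1 h2
          · rintro rfl; exact ⟨le_refl _, le_refl _⟩
        rw [he, hatom x]
      rw [lintegral_congr h0]
      simp
    have huniv : s1 ∪ s2 = Set.univ := by
      ext q
      simp [hs1def, hs2def, le_total]
    have hsum : (ν.prod ν) s1 + (ν.prod ν) s1 = 1 := by
      have h := measure_union_add_inter (μ := ν.prod ν) s1 hs2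
      rw [huniv, hdiag, measure_univ, add_zero, hswap] at h
      exact h.symm
    have e1 : ∫ ω, F (X ω) ∂P = ∫ t, F t ∂ν :=
      (integral_map hXae hFmeas.aestronglyMeasurable).symm
    have e2 : ∫ t, F t ∂ν = (∫⁻ t, ENNReal.ofReal (F t) ∂ν).toReal :=
      integral_eq_lintegral_of_nonneg_ae (Filter.Eventually.of_forall hF0)
        hFmeas.aestronglyMeasurable
    have e3 : ∫⁻ t, ENNReal.ofReal (F t) ∂ν = (ν.prod ν) s1 := by
      rw [Measure.prod_apply hs1]
      apply lintegral_congr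
      intro x
      rw [hFofReal x]
      rfl
    have hfin : (ν.prod ν) s1 ≠ ⊤ := (measure_lt_top _ _).ne
    have e4 : ((ν.prod ν) s1).toReal + ((ν.prod ν) s1).toReal = 1 := by
      rw [← ENNReal.toReal_add hfin hfin, hsum, ENNReal.toReal_one]
    rw [e1, e2, e3]
    linarith
  -- the Lorenz integral
  have hLint : ∫ p in (0:ℝ)..1, L p = (1 / μ) * (μ - ∫ ω, X ω * F (X ω) ∂P) := by
    rw [intervalIntegral.integral_of_le zero_le_one, integral_Ioc_eq_integral_Ioo]
    have hcongr : Set.EqOn L (fun p => (1 / μ) * (f p).toReal) (Set.Ioo (0:ℝ) 1) := by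
      intro p hp
      rw [hL p, Measure.restrict_congr_set (hsetae p hp), hg p]
    rw [setIntegral_congr_fun measurableSet_Ioo hcongr, integral_const_mul, key, hsub_int, hI1, hI2]
  -- conclusion
  have hμne : μ ≠ 0 := ne_of_gt hμpos
  rw [hG, hLint, hJ]
  field_simp
  ring
end

section
/- Let X1, X2, …, Xν be independent and identically distributed non-negative random variables with continuous distribution function F, survival function F̄ = 1 − F, and finite mean μ, where ν ≥ 2 is an integer. Then the absolute S-Gini index S_ν = −ν Cov(X1, F̄(X1)^{ν−1}) satisfies S_ν = μ − E[min(X1, X2, …, Xν)]. -/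
open MeasureTheory ProbabilityTheory Set Filter Topology intervalIntegral
open scoped NNReal ENNReal

/-- No atoms, from continuity of the survival function. -/
lemma sg_no_atom (ρ : Measure ℝ) [IsProbabilityMeasure ρ] (G : ℝ → ℝ)
    (hG : ∀ x, G x = (ρ (Set.Ioi x)).toReal) (hGc : Continuous G) (x : ℝ) :
    ρ {x} = 0 := by
  have hioc : ∀ y < x, (ρ (Set.Ioc y x)).toReal = G y - G x := by
    intro y hy
    have hd : Set.Ioc y x = Set.Ioi y \ Set.Ioi x := by
      ext z
      constructor
      · rintro ⟨h1, h2⟩; exact ⟨h1, by simpa using h2⟩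
      · rintro ⟨h1, h2⟩; exact ⟨h1, by simpa using h2⟩
    rw [hd, measure_diff (Set.Ioi_subset_Ioi hy.le) measurableSet_Ioi.nullMeasurableSet
      (measure_ne_top ρ _)]
    rw [ENNReal.toReal_sub_of_le (measure_mono (Set.Ioi_subset_Ioi hy.le)) (measure_ne_top ρ _),
      hG, hG]
  have hbound : ∀ y < x, (ρ {x}).toReal ≤ G y - G x := by
    intro y hy
    rw [← hioc y hy]
    exact ENNReal.toReal_mono (measure_ne_top ρ _)
      (measure_mono (by simp [Set.singleton_subset_iff, hy]))
  have htend : Filter.Tendsto (fun y => G y - G x) (nhdsWithin x (Set.Iio x)) (nhds 0) := by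
    have h1 : Filter.Tendsto G (nhdsWithin x (Set.Iio x)) (nhds (G x)) :=
      (hGc.tendsto x).mono_left nhdsWithin_le_nhds
    have h2 := h1.sub (tendsto_const_nhds (x := G x))
    simpa using h2
  have hle : (ρ {x}).toReal ≤ 0 := by
    refine ge_of_tendsto htend ?_
    filter_upwards [self_mem_nhdsWithin] with y hy using hbound y hy
  have : (ρ {x}).toReal = 0 := le_antisymm hle ENNReal.toReal_nonneg
  simpa [measure_ne_top ρ] using (ENNReal.toReal_eq_zero_iff _).mp this |>.resolve_right
    (measure_ne_top ρ _)

/-- Probability integral transform: the survival function maps `ρ` to uniform on `[0,1]`. -/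
lemma sg_pit (ρ : Measure ℝ) [IsProbabilityMeasure ρ] (G : ℝ → ℝ)
    (hG : ∀ x, G x = (ρ (Set.Ioi x)).toReal) (hGc : Continuous G) :
    ρ.map G = (volume : Measure ℝ).restrict (Set.Icc 0 1) := by
  have hanti : Antitone G := fun a b hab => by
    rw [hG, hG]
    exact ENNReal.toReal_mono (measure_ne_top ρ _) (measure_mono (Set.Ioi_subset_Ioi hab))
  have h0 : ∀ x, 0 ≤ G x := fun x => by rw [hG]; exact ENNReal.toReal_nonneg
  have h1 : ∀ x, G x ≤ 1 := fun x => by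
    rw [hG]
    simpa using ENNReal.toReal_mono ENNReal.one_ne_top prob_le_one
  have hGalt : ∀ x, G x = 1 - (ρ (Set.Iic x)).toReal := by
    intro x
    have hsum : ρ (Set.Iic x) + ρ (Set.Ioi x) = 1 := by
      rw [← Set.compl_Iic, measure_add_measure_compl measurableSet_Iic, measure_univ]
    have := congrArg ENNReal.toReal hsum
    rw [ENNReal.toReal_add (measure_ne_top ρ _) (measure_ne_top ρ _)] at this
    simp only [ENNReal.toReal_one] at this
    rw [hG]; linarith
  have htop : Filter.Tendsto G atTop (nhds 0) := by
    have h2 : Filter.Tendsto (fun x => (ρ (Set.Iic x)).toReal) atTop (nhds 1) := by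
      have := (ENNReal.tendsto_toReal (measure_ne_top ρ Set.univ)).comp
        (tendsto_measure_Iic_atTop ρ)
      simpa [Function.comp_def] using this
    have h3 := (tendsto_const_nhds (x := (1:ℝ)) (f := atTop)).sub h2
    simp only [sub_self] at h3
    refine h3.congr fun x => ?_
    rw [hGalt]
  have key : ∀ u : ℝ, 0 ≤ u → u ≤ 1 → ρ {x | G x ≤ u} = ENNReal.ofReal u := by
    intro u hu0 hu1
    set S := {x | G x ≤ u} with hS
    have hSclosed : IsClosed S := isClosed_le hGc continuous_const
    by_cases hSne : S.Nonempty
    · by_cases hSuniv : S = Set.univ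
      · have hU : ∀ y : ℝ, G y ≤ u := fun y => by
          have : y ∈ S := hSuniv ▸ Set.mem_univ y
          exact this
        have hbot : Filter.Tendsto (fun y : ℝ => (ρ (Set.Ici y)).toReal) atBot (nhds 1) := by
          have := (ENNReal.tendsto_toReal (measure_ne_top ρ Set.univ)).comp
            (tendsto_measure_Ici_atBot ρ)
          simpa [Function.comp_def] using this
        have hu_ge : (1:ℝ) ≤ u := by
          refine le_of_tendsto hbot ?_
          filter_upwards with y
          calc (ρ (Set.Ici y)).toReal ≤ G (y - 1) := by
                rw [hG]
                exact ENNReal.toReal_mono (measure_ne_top ρ _)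
                  (measure_mono (fun z hz => lt_of_lt_of_le (by linarith : y - 1 < y) hz))
            _ ≤ u := hU _
        have hu : u = 1 := le_antisymm hu1 hu_ge
        rw [hSuniv, hu]
        simp
      · obtain ⟨b, hb⟩ : ∃ b, b ∉ S := by
          by_contra h
          push_neg at h
          exact hSuniv (Set.eq_univ_iff_forall.mpr h)
        have hbu : u < G b := lt_of_not_ge hb
        have hSb : ∀ z ∈ S, b < z := by
          intro z hz
          by_contra h
          push_neg at h
          exact absurd (le_trans (hanti h) hz) (not_le.mpr hbu)
        have hbdd : BddBelow S := ⟨b, fun z hz => (hSb z hz).le⟩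
        set a := sInf S with ha_def
        have haS : a ∈ S := hSclosed.csInf_mem hSne hbdd
        have hGa_le : G a ≤ u := haS
        have hGa_ge : u ≤ G a := by
          have h1a : Filter.Tendsto G (nhdsWithin a (Set.Iio a)) (nhds (G a)) :=
            (hGc.tendsto a).mono_left nhdsWithin_le_nhds
          refine ge_of_tendsto h1a ?_
          filter_upwards [self_mem_nhdsWithin] with y hy
          have hyS : y ∉ S := fun h => absurd (csInf_le hbdd h) (not_le.mpr hy)
          exact (lt_of_not_ge hyS).le
        have hGa : G a = u := le_antisymm hGa_le hGa_ge
        have hS_eq : S = Set.Ici a := by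
          ext z
          constructor
          · exact fun hz => csInf_le hbdd hz
          · exact fun hz => le_trans (hanti hz) (hGa ▸ le_refl u)
        rw [hS_eq, ← measure_congr (Ioi_ae_eq_Ici' (sg_no_atom ρ G hG hGc a)), ← hGa, hG,
          ENNReal.ofReal_toReal (measure_ne_top ρ _)]
    · have hSempty : S = ∅ := Set.not_nonempty_iff_eq_empty.mp hSne
      have hu : u = 0 := by
        by_contra h
        have hupos : 0 < u := lt_of_le_of_ne hu0 (Ne.symm h)
        have : ∀ᶠ x in atTop, G x < u := htop.eventually (eventually_lt_nhds hupos)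
        obtain ⟨x, hx⟩ := this.exists
        exact absurd (hSempty ▸ hx.le : x ∈ (∅ : Set ℝ)) (Set.notMem_empty x)
      rw [hSempty, hu]
      simp
  refine MeasureTheory.Measure.ext_of_Iic (ρ.map G) _ (fun u => ?_)
  rw [Measure.map_apply hGc.measurable measurableSet_Iic,
    Measure.restrict_apply measurableSet_Iic]
  rcases lt_or_ge u 0 with hu | hu
  · have h1' : G ⁻¹' Set.Iic u = ∅ := by
      ext x
      simp only [Set.mem_preimage, Set.mem_Iic, Set.mem_empty_iff_false, iff_false, not_le]
      exact lt_of_lt_of_le hu (h0 x)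
    have h2' : Set.Iic u ∩ Set.Icc (0:ℝ) 1 = ∅ := by
      ext x
      simp only [Set.mem_inter_iff, Set.mem_Iic, Set.mem_Icc, Set.mem_empty_iff_false, iff_false]
      rintro ⟨hx1, hx2, -⟩
      linarith
    rw [h1', h2']
    simp
  · rcases le_or_gt u 1 with hu1 | hu1
    · have h2' : Set.Iic u ∩ Set.Icc (0:ℝ) 1 = Set.Icc 0 u := by
        ext x
        simp only [Set.mem_inter_iff, Set.mem_Iic, Set.mem_Icc]
        constructor
        · rintro ⟨hx1, hx2, -⟩; exact ⟨hx2, hx1⟩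
        · rintro ⟨hx1, hx2⟩; exact ⟨hx2, hx1, le_trans hx2 hu1⟩
      rw [h2', Real.volume_Icc, sub_zero]
      exact key u hu hu1
    · have h1' : G ⁻¹' Set.Iic u = Set.univ :=
        Set.eq_univ_iff_forall.mpr fun x => le_trans (h1 x) hu1.le
      have h2' : Set.Iic u ∩ Set.Icc (0:ℝ) 1 = Set.Icc 0 1 := by
        ext x
        simp only [Set.mem_inter_iff, Set.mem_Iic, Set.mem_Icc]
        constructor
        · rintro ⟨-, hx⟩; exact hx
        · rintro ⟨hx1, hx2⟩; exact ⟨le_trans hx2 hu1.le, hx1, hx2⟩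
      rw [h1', h2', Real.volume_Icc]
      simp

lemma sg_moment (ρ : Measure ℝ) [IsProbabilityMeasure ρ] (G : ℝ → ℝ)
    (hG : ∀ x, G x = (ρ (Set.Ioi x)).toReal) (hGc : Continuous G) (n : ℕ) :
    ∫ x, G x ^ n ∂ρ = 1 / (n + 1) := by
  have hmap := sg_pit ρ G hG hGc
  have h1 : ∫ x, G x ^ n ∂ρ = ∫ u, u ^ n ∂(ρ.map G) :=
    (integral_map hGc.measurable.aemeasurable ((continuous_pow n).aestronglyMeasurable)).symm
  rw [h1, hmap, MeasureTheory.integral_Icc_eq_integral_Ioc,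
    ← intervalIntegral.integral_of_le (zero_le_one), integral_pow]
  simp

lemma sg_tail (ρ : Measure ℝ) [IsProbabilityMeasure ρ] (G : ℝ → ℝ)
    (hG : ∀ x, G x = (ρ (Set.Ioi x)).toReal) (hGc : Continuous G) (n : ℕ) (t : ℝ) :
    ∫ x in Set.Ioi t, G x ^ n ∂ρ = G t ^ (n + 1) / (n + 1) := by
  have hmap := sg_pit ρ G hG hGc
  have hanti : Antitone G := fun a b hab => by
    rw [hG, hG]
    exact ENNReal.toReal_mono (measure_ne_top ρ _) (measure_mono (Set.Ioi_subset_Ioi hab))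
  have h0 : 0 ≤ G t := by rw [hG]; exact ENNReal.toReal_nonneg
  have h1 : G t ≤ 1 := by
    rw [hG]
    simpa using ENNReal.toReal_mono ENNReal.one_ne_top prob_le_one
  have hnull : ρ {x | G x = G t} = 0 := by
    have : {x | G x = G t} = G ⁻¹' {G t} := rfl
    rw [this, ← Measure.map_apply hGc.measurable (measurableSet_singleton _), hmap]
    rw [Measure.restrict_apply (measurableSet_singleton _)]
    exact measure_mono_null Set.inter_subset_left Real.volume_singleton
  rw [← MeasureTheory.integral_indicator measurableSet_Ioi]
  have hae : (Set.Ioi t).indicator (fun x => G x ^ n) =ᵐ[ρ]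
      fun x => Set.indicator (Set.Iio (G t)) (fun u => u ^ n) (G x) := by
    have hne : ∀ᵐ x ∂ρ, G x ≠ G t := by
      rw [ae_iff]
      simpa using hnull
    filter_upwards [hne] with x hx
    by_cases hxt : x ∈ Set.Ioi t
    · have hlt : G x < G t := lt_of_le_of_ne (hanti (le_of_lt hxt)) hx
      rw [Set.indicator_of_mem hxt, Set.indicator_of_mem (Set.mem_Iio.mpr hlt)]
    · have hge : G t ≤ G x := hanti (not_lt.mp hxt)
      have hnm : G x ∉ Set.Iio (G t) := not_lt.mpr hge
      rw [Set.indicator_of_notMem hxt, Set.indicator_of_notMem hnm]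
  rw [integral_congr_ae hae]
  have hmi : ∫ x, Set.indicator (Set.Iio (G t)) (fun u => u ^ n) (G x) ∂ρ
      = ∫ u, Set.indicator (Set.Iio (G t)) (fun u => u ^ n) u ∂(ρ.map G) :=
    (integral_map hGc.measurable.aemeasurable
      (((measurable_id.pow_const n).indicator measurableSet_Iio).aestronglyMeasurable)).symm
  rw [hmi, hmap, MeasureTheory.integral_indicator measurableSet_Iio,
    Measure.restrict_restrict measurableSet_Iio]
  have hset : Set.Iio (G t) ∩ Set.Icc (0:ℝ) 1 = Set.Ico 0 (G t) := by
    ext u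
    simp only [Set.mem_inter_iff, Set.mem_Iio, Set.mem_Icc, Set.mem_Ico]
    constructor
    · rintro ⟨hu, hu0, -⟩; exact ⟨hu0, hu⟩
    · rintro ⟨hu0, hu⟩; exact ⟨hu, hu0, le_trans hu.le h1⟩
  rw [hset, MeasureTheory.integral_Ico_eq_integral_Ioo, ← MeasureTheory.integral_Ioc_eq_integral_Ioo,
    ← intervalIntegral.integral_of_le h0, integral_pow]
  simp

lemma sg_main {Ω : Type*} [MeasurableSpace Ω]
    (P : Measure Ω) [IsProbabilityMeasure P] (ν : ℕ) (hν : 2 ≤ ν)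
    (X : Fin ν → Ω → ℝ) (hm : ∀ i, Measurable (X i))
    (hpos : ∀ i ω, 0 ≤ X i ω) (i0 : Fin ν)
    (hid : ∀ i, IdentDistrib (X i) (X i0) P P)
    (hindep : iIndepFun X P)
    (hint : Integrable (X i0) P)
    (μ : ℝ) (hμ : μ = ∫ ω, X i0 ω ∂P)
    (F : ℝ → ℝ) (hF : ∀ x, F x = (P.map (X i0) (Set.Iic x)).toReal)
    (hFcont : Continuous F) :
    -(ν : ℝ) * ((∫ ω, X i0 ω * (1 - F (X i0 ω)) ^ (ν - 1) ∂P) -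
        μ * (∫ ω, (1 - F (X i0 ω)) ^ (ν - 1) ∂P)) =
      μ - ∫ ω, (⨅ i, X i ω) ∂P := by
  classical
  haveI : Nonempty (Fin ν) := ⟨i0⟩
  set ρ : Measure ℝ := P.map (X i0) with hρ
  haveI : IsProbabilityMeasure ρ := Measure.isProbabilityMeasure_map (hm i0).aemeasurable
  set G : ℝ → ℝ := fun x => (ρ (Set.Ioi x)).toReal with hGdef
  have hG : ∀ x, G x = (ρ (Set.Ioi x)).toReal := fun x => rfl
  have h1F : ∀ x, 1 - F x = G x := by
    intro x
    have hsum : ρ (Set.Iic x) + ρ (Set.Ioi x) = 1 := by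
      rw [← Set.compl_Iic, measure_add_measure_compl measurableSet_Iic, measure_univ]
    have h2 := congrArg ENNReal.toReal hsum
    rw [ENNReal.toReal_add (measure_ne_top ρ _) (measure_ne_top ρ _)] at h2
    simp only [ENNReal.toReal_one] at h2
    rw [hF, hG]
    linarith
  have hGc : Continuous G := by
    have hGF : G = fun x => 1 - F x := funext fun x => (h1F x).symm
    rw [hGF]; exact continuous_const.sub hFcont
  set n : ℕ := ν - 1 with hn
  have hcast : ((n : ℝ) + 1) = (ν : ℝ) := by
    have : n + 1 = ν := by omega
    exact_mod_cast congrArg (Nat.cast (R := ℝ)) this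
  have hνne : (ν : ℝ) ≠ 0 := by positivity
  -- expectation of the survival power
  have EA : ∫ ω, (1 - F (X i0 ω)) ^ n ∂P = 1 / ν := by
    simp_rw [h1F]
    have h1 : ∫ ω, G (X i0 ω) ^ n ∂P = ∫ x, G x ^ n ∂ρ :=
      (integral_map (hm i0).aemeasurable ((hGc.pow n).aestronglyMeasurable)).symm
    rw [h1, sg_moment ρ G hG hGc n, hcast]
  -- expectation of the minimum
  have hbdd : ∀ ω, BddBelow (Set.range fun i => X i ω) :=
    fun ω => (Set.finite_range _).bddBelow
  have hMnn : ∀ ω, 0 ≤ ⨅ i, X i ω := fun ω => le_ciInf fun i => hpos i ω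
  have hMmeas : Measurable fun ω => ⨅ i, X i ω := Measurable.iInf hm
  have hMint : Integrable (fun ω => ⨅ i, X i ω) P := by
    refine hint.mono hMmeas.aestronglyMeasurable (ae_of_all _ fun ω => ?_)
    rw [Real.norm_eq_abs, Real.norm_eq_abs, abs_of_nonneg (hMnn ω),
      abs_of_nonneg (hpos i0 ω)]
    exact ciInf_le (hbdd ω) i0
  have hsetmin : ∀ t : ℝ, {ω | t < ⨅ i, X i ω} = ⋂ i, X i ⁻¹' (Set.Ioi t) := by
    intro t
    ext ω
    simp only [Set.mem_setOf_eq, Set.mem_iInter, Set.mem_preimage, Set.mem_Ioi]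
    constructor
    · exact fun h i => lt_of_lt_of_le h (ciInf_le (hbdd ω) i)
    · intro h
      obtain ⟨j, hj⟩ := exists_eq_ciInf_of_finite (f := fun i => X i ω)
      rw [← hj]
      exact h j
  have hprod : ∀ t : ℝ, P {ω | t < ⨅ i, X i ω} = (ρ (Set.Ioi t)) ^ ν := by
    intro t
    rw [hsetmin t, hindep.meas_iInter (fun i => ⟨Set.Ioi t, measurableSet_Ioi, rfl⟩)]
    have hXi : ∀ i, P (X i ⁻¹' Set.Ioi t) = ρ (Set.Ioi t) := by
      intro i
      rw [← Measure.map_apply (hm i) measurableSet_Ioi, (hid i).map_eq]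
    simp only [hXi]
    rw [Finset.prod_const, Finset.card_univ, Fintype.card_fin]
  have EB : ∫ ω, (⨅ i, X i ω) ∂P = ∫ t in Set.Ioi (0:ℝ), G t ^ ν := by
    rw [hMint.integral_eq_integral_meas_lt (ae_of_all _ hMnn)]
    refine integral_congr_ae (ae_of_all _ fun t => ?_)
    show (P {ω | t < ⨅ i, X i ω}).toReal = G t ^ ν
    rw [hprod t, ENNReal.toReal_pow, hG]
  -- the cross term
  have EC : ∫ ω, X i0 ω * (1 - F (X i0 ω)) ^ n ∂P
      = (∫ t in Set.Ioi (0:ℝ), G t ^ ν) / ν := by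
    simp_rw [h1F]
    have h1 : ∫ ω, X i0 ω * G (X i0 ω) ^ n ∂P = ∫ x, x * G x ^ n ∂ρ :=
      (integral_map (hm i0).aemeasurable
        ((continuous_id.mul (hGc.pow n)).aestronglyMeasurable)).symm
    set f' : ℝ → ℝ≥0 := fun x => Real.toNNReal (G x ^ n) with hf'
    have hf'm : Measurable f' := (hGc.pow n).measurable.real_toNNReal
    set ρ' : Measure ℝ := ρ.withDensity (fun x => (f' x : ℝ≥0∞)) with hρ'
    have hGn0 : ∀ x, 0 ≤ G x ^ n := fun x => pow_nonneg (by rw [hG]; positivity) n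
    have hGn1 : ∀ x, G x ^ n ≤ 1 := by
      intro x
      refine pow_le_one₀ (by rw [hG]; positivity) ?_
      rw [hG]
      simpa using ENNReal.toReal_mono ENNReal.one_ne_top prob_le_one
    have hleft : ∫ x, x ∂ρ' = ∫ x, x * G x ^ n ∂ρ := by
      rw [hρ', integral_withDensity_eq_integral_smul hf'm]
      refine integral_congr_ae (ae_of_all _ fun x => ?_)
      simp only [hf', NNReal.smul_def, smul_eq_mul, Real.coe_toNNReal _ (hGn0 x)]
      ring
    have hid_ρ : Integrable (fun x => x) ρ := by
      rw [hρ]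
      exact (integrable_map_measure aestronglyMeasurable_id (hm i0).aemeasurable).mpr hint
    have hint' : Integrable (fun x => x) ρ' := by
      rw [hρ', integrable_withDensity_iff_integrable_smul hf'm]
      refine hid_ρ.mono ?_ (ae_of_all _ fun x => ?_)
      · exact (hf'm.coe_nnreal_real.aestronglyMeasurable.mul aestronglyMeasurable_id)
      · simp only [NNReal.smul_def, smul_eq_mul, Real.norm_eq_abs, abs_mul]
        calc |(f' x : ℝ)| * |x| ≤ 1 * |x| := by
              refine mul_le_mul_of_nonneg_right ?_ (abs_nonneg x)
              rw [abs_of_nonneg (by positivity)]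
              simp only [hf', Real.coe_toNNReal _ (hGn0 x)]
              exact hGn1 x
          _ = |x| := one_mul _
    have hnn_ρ : ∀ᵐ x ∂ρ, 0 ≤ x := by
      rw [hρ]
      rw [ae_map_iff (hm i0).aemeasurable measurableSet_Ici]
      exact ae_of_all _ (hpos i0)
    have hnn_ρ' : ∀ᵐ x ∂ρ', 0 ≤ x :=
      (withDensity_absolutelyContinuous ρ _).ae_le hnn_ρ
    have hlayer : ∫ x, x ∂ρ' = ∫ t in Set.Ioi (0:ℝ), (ρ' {a : ℝ | t < a}).toReal :=
      hint'.integral_eq_integral_meas_lt hnn_ρ'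
    have htail : ∀ t : ℝ, (ρ' {a : ℝ | t < a}).toReal = G t ^ ν / ν := by
      intro t
      have hIoi : {a : ℝ | t < a} = Set.Ioi t := rfl
      rw [hIoi, hρ', withDensity_apply _ measurableSet_Ioi]
      have h2 : ∫ x in Set.Ioi t, G x ^ n ∂ρ
          = (∫⁻ x in Set.Ioi t, ENNReal.ofReal (G x ^ n) ∂ρ).toReal := by
        rw [integral_eq_lintegral_of_nonneg_ae (ae_of_all _ fun x => hGn0 x)
          ((hGc.pow n).aestronglyMeasurable)]
      have h3 : (fun x => (f' x : ℝ≥0∞)) = fun x => ENNReal.ofReal (G x ^ n) := rfl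
      rw [← h3] at h2
      rw [← h2, sg_tail ρ G hG hGc n t]
      have : n + 1 = ν := by omega
      rw [this, hcast]
    rw [h1, ← hleft, hlayer]
    rw [integral_congr_ae (ae_of_all _ fun t => htail t), MeasureTheory.integral_div]
  -- assemble
  rw [EA, EC, EB]
  field_simp
  ring


/-- For `X₁, …, X_ν` i.i.d. non-negative random variables with continuous
distribution function `F`, survival function `F̄ = 1 − F` and finite mean `μ`, the absolute
S-Gini index `S_ν = −ν Cov(X₁, F̄(X₁)^{ν−1})` satisfies
`S_ν = μ − E[min(X₁, …, X_ν)]`. -/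
theorem absolute_sgini_eq_mean_sub_expected_min {Ω : Type*} [MeasurableSpace Ω]
    (P : Measure Ω) [IsProbabilityMeasure P] (ν : ℕ) (hν : 2 ≤ ν)
    (X : Fin ν → Ω → ℝ) (hm : ∀ i, Measurable (X i))
    (hpos : ∀ i ω, 0 ≤ X i ω)
    (hid : ∀ i, IdentDistrib (X i) (X ⟨0, by omega⟩) P P)
    (hindep : iIndepFun X P)
    (hint : Integrable (X ⟨0, by omega⟩) P)
    (μ : ℝ) (hμ : μ = ∫ ω, X ⟨0, by omega⟩ ω ∂P)
    (F : ℝ → ℝ) (hF : ∀ x, F x = (P.map (X ⟨0, by omega⟩) (Set.Iic x)).toReal)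
    (hFcont : Continuous F) :
    -(ν : ℝ) * ((∫ ω, X ⟨0, by omega⟩ ω * (1 - F (X ⟨0, by omega⟩ ω)) ^ (ν - 1) ∂P) -
        μ * (∫ ω, (1 - F (X ⟨0, by omega⟩ ω)) ^ (ν - 1) ∂P)) =
      μ - ∫ ω, (⨅ i, X i ω) ∂P :=
  sg_main P ν hν X hm hpos _ hid hindep hint μ hμ F hF hFcont
end

section
/- Let X1, …, Xn be independent and identically distributed non-negative random variables with continuous distribution function F, survival function F̄ = 1 − F, and finite mean μ, and let 2 ≤ ν ≤ n be an integer. Define the symmetric kernel h(x1, …, xν) = (x1 + x2 + ⋯ + xν − ν min(x1, …, xν))/ν and the U-statistic Ŝ_ν = C(n,ν)^{-1} Σ_{i1 < i2 < ⋯ < iν} h(X_{i1}, …, X_{iν}). Then E(Ŝ_ν) = S_ν, where S_ν = −ν Cov(X1, F̄(X1)^{ν−1}) is the absolute S-Gini index; i.e., Ŝ_ν is an unbiased estimator of S_ν. -/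
open MeasureTheory ProbabilityTheory


lemma aux_measurable_inf' {Ω ι : Type*} [MeasurableSpace Ω] (s : Finset ι) (hs : s.Nonempty)
    (f : ι → Ω → ℝ) (hf : ∀ i, Measurable (f i)) :
    Measurable (fun ω => s.inf' hs fun i => f i ω) := by
  induction hs using Finset.Nonempty.cons_induction with
  | singleton a => simpa using hf a
  | cons a s h hs ih =>
      have heq : (fun ω => (Finset.cons a s h).inf' (Finset.cons_nonempty h) fun i => f i ω)
          = fun ω => (f a ω) ⊓ (s.inf' hs fun i => f i ω) := funext fun ω => Finset.inf'_cons hs _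
      rw [heq]
      exact (hf a).inf ih

lemma aux_min_sum {ι : Type*} [DecidableEq ι] (s : Finset ι) (hs : s.Nonempty) (f : ι → ℝ)
    (hinj : ∀ i ∈ s, ∀ j ∈ s, i ≠ j → f i ≠ f j) :
    (∑ i ∈ s, f i * ∏ j ∈ s.erase i, (if f i < f j then (1:ℝ) else 0)) = s.inf' hs f ∧
    (∑ i ∈ s, ∏ j ∈ s.erase i, (if f i < f j then (1:ℝ) else 0)) = 1 := by
  obtain ⟨a, ha, hinf⟩ := Finset.exists_mem_eq_inf' hs f
  have hprod : ∀ i ∈ s, (∏ j ∈ s.erase i, (if f i < f j then (1:ℝ) else 0))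
      = if i = a then 1 else 0 := by
    intro i hi
    by_cases hia : i = a
    · subst hia
      simp only [if_pos rfl]
      apply Finset.prod_eq_one
      intro j hj
      have hjs := Finset.mem_of_mem_erase hj
      have hne : j ≠ i := Finset.ne_of_mem_erase hj
      have hle : f i ≤ f j := hinf ▸ Finset.inf'_le f hjs
      have : f i < f j := lt_of_le_of_ne hle (fun h => (hinj j hjs i hi hne) h.symm)
      simp [this]
    · rw [if_neg hia]
      apply Finset.prod_eq_zero (Finset.mem_erase.mpr ⟨fun h => hia h.symm, ha⟩)
      have hle : f a ≤ f i := hinf ▸ Finset.inf'_le f hi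
      simp [not_lt.mpr hle]
  constructor
  · rw [Finset.sum_congr rfl (fun i hi => by rw [hprod i hi])]
    rw [Finset.sum_eq_single a (fun b hb hba => by simp [hba]) (fun h => absurd ha h)]
    simp [hinf]
  · rw [Finset.sum_congr rfl (fun i hi => hprod i hi)]
    rw [Finset.sum_eq_single a (fun b hb hba => by simp [hba]) (fun h => absurd ha h)]
    simp


lemma aux_noatom (m : Measure ℝ) [IsProbabilityMeasure m] (F : ℝ → ℝ)
    (hF : ∀ x, F x = (m (Set.Iic x)).toReal) (hFcont : Continuous F) (x : ℝ) : m {x} = 0 := by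
  have hIoc : ∀ y, y ≤ x → (m (Set.Ioc y x)).toReal = F x - F y := by
    intro y hy
    have hsplit : m (Set.Iic x) = m (Set.Iic y) + m (Set.Ioc y x) := by
      rw [← Set.Iic_union_Ioc_eq_Iic hy]
      exact measure_union (Set.Iic_disjoint_Ioc le_rfl) measurableSet_Ioc
    have h1 : (m (Set.Ioc y x)).toReal = (m (Set.Iic x)).toReal - (m (Set.Iic y)).toReal := by
      rw [hsplit, ENNReal.toReal_add (measure_ne_top _ _) (measure_ne_top _ _)]; ring
    rw [h1, hF, hF]
  have hle : ∀ y ∈ Set.Iio x, (m {x}).toReal ≤ F x - F y := by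
    intro y hy
    rw [← hIoc y (le_of_lt hy)]
    refine ENNReal.toReal_mono (measure_ne_top _ _) (measure_mono ?_)
    intro z hz
    simp only [Set.mem_singleton_iff] at hz
    subst hz
    exact ⟨hy, le_rfl⟩
  have htend : Filter.Tendsto (fun y => F x - F y) (nhdsWithin x (Set.Iio x)) (nhds 0) := by
    have h : Filter.Tendsto (fun y => F x - F y) (nhds x) (nhds (F x - F x)) :=
      ((continuous_const (y := F x)).sub hFcont).tendsto x
    simp only [sub_self] at h
    exact h.mono_left nhdsWithin_le_nhds
  have h0 : (m {x}).toReal ≤ 0 :=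
    ge_of_tendsto htend (eventually_nhdsWithin_of_forall hle)
  have h1 : (m {x}).toReal = 0 := le_antisymm h0 ENNReal.toReal_nonneg
  exact ((ENNReal.toReal_eq_zero_iff _).mp h1).resolve_right (measure_ne_top _ _)

lemma aux_ae_ne {Ω : Type*} [MeasurableSpace Ω] (P : Measure Ω) [IsProbabilityMeasure P]
    (f g : Ω → ℝ) (hf : Measurable f) (hg : Measurable g) (hind : IndepFun f g P)
    (hatom : ∀ x, P.map g {x} = 0) : ∀ᵐ ω ∂P, f ω ≠ g ω := by
  have hpair : P.map (fun ω => (f ω, g ω)) = (P.map f).prod (P.map g) :=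
    (indepFun_iff_map_prod_eq_prod_map_map hf.aemeasurable hg.aemeasurable).mp hind
  have hdiag : MeasurableSet {p : ℝ × ℝ | p.1 = p.2} :=
    measurableSet_eq_fun measurable_fst measurable_snd
  have hz : P {ω | f ω = g ω} = 0 := by
    have h1 : {ω | f ω = g ω} = (fun ω => (f ω, g ω)) ⁻¹' {p : ℝ × ℝ | p.1 = p.2} := rfl
    rw [h1, ← Measure.map_apply (hf.prodMk hg) hdiag, hpair, Measure.prod_apply hdiag]
    have h2 : ∀ x : ℝ, (P.map g) (Prod.mk x ⁻¹' {p : ℝ × ℝ | p.1 = p.2}) = 0 := by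
      intro x
      have : Prod.mk x ⁻¹' {p : ℝ × ℝ | p.1 = p.2} = {x} := by
        ext y; simp [eq_comm]
      rw [this]
      exact hatom x
    simp only [h2, lintegral_zero]
  rw [show (∀ᵐ ω ∂P, f ω ≠ g ω) ↔ P {ω | ¬ f ω ≠ g ω} = 0 from ae_iff]
  simpa [not_not] using hz


lemma aux_key {Ω : Type*} [MeasurableSpace Ω] (P : Measure Ω) [IsProbabilityMeasure P] {n : ℕ}
    (X : Fin n → Ω → ℝ) (hm : ∀ i, Measurable (X i))
    (hindep : iIndepFun X P)
    (i0 : Fin n) (hid : ∀ i, IdentDistrib (X i) (X i0) P P)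
    (i : Fin n) (T : Finset (Fin n)) (hiT : i ∉ T)
    (g : ℝ → ℝ) (hg : Measurable g) (hgint : Integrable (fun ω => g (X i0 ω)) P)
    (F : ℝ → ℝ) (hFmeas : Measurable F)
    (hsurv : ∀ x, ((P.map (X i0)) (Set.Ioi x)).toReal = 1 - F x) :
    ∫ ω, g (X i ω) * ∏ j ∈ T, (if X i ω < X j ω then (1:ℝ) else 0) ∂P
      = ∫ ω, g (X i0 ω) * (1 - F (X i0 ω)) ^ T.card ∂P := by
  classical
  set V : Ω → ({x // x ∈ T} → ℝ) := fun ω j => X j.1 ω with hV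
  have hVmeas : Measurable V := measurable_pi_lambda _ fun j => hm j.1
  have hpairmeas : Measurable (fun ω => (X i ω, V ω)) := (hm i).prodMk hVmeas
  have hpair : IndepFun (X i) V P := by
    have h := hindep.indepFun_finset {i} T (Finset.disjoint_singleton_left.mpr hiT) hm
    exact h.comp (φ := fun v : ({x // x ∈ ({i} : Finset (Fin n))} → ℝ) =>
      v ⟨i, Finset.mem_singleton_self i⟩) (ψ := id) (measurable_pi_apply _) measurable_id
  set m := P.map (X i0) with hmdef
  haveI : IsProbabilityMeasure m := Measure.isProbabilityMeasure_map (hm i0).aemeasurable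
  haveI : IsProbabilityMeasure (P.map V) := Measure.isProbabilityMeasure_map hVmeas.aemeasurable
  have hmapPair : P.map (fun ω => (X i ω, V ω)) = m.prod (P.map V) := by
    rw [hmdef, ← (hid i).map_eq]
    exact (indepFun_iff_map_prod_eq_prod_map_map (hm i).aemeasurable hVmeas.aemeasurable).mp hpair
  set Φ : ℝ × ({x // x ∈ T} → ℝ) → ℝ :=
    fun p => g p.1 * ∏ j : {x // x ∈ T}, (if p.1 < p.2 j then (1:ℝ) else 0) with hΦ
  have hΦmeas : Measurable Φ := by
    apply (hg.comp measurable_fst).mul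
    apply Finset.measurable_prod
    intro j _
    exact Measurable.ite
      (measurableSet_lt measurable_fst ((measurable_pi_apply j).comp measurable_snd))
      measurable_const measurable_const
  have hcomp : ∀ ω, Φ (X i ω, V ω)
      = g (X i ω) * ∏ j ∈ T, (if X i ω < X j ω then (1:ℝ) else 0) := by
    intro ω
    simp only [hΦ, hV]
    congr 1
    rw [Finset.univ_eq_attach,
      Finset.prod_attach T (fun j => if X i ω < X j ω then (1:ℝ) else 0)]
  have hgiint : Integrable (fun ω => g (X i ω)) P :=
    ((hid i).comp hg).integrable_iff.mpr hgint
  have hcompint : Integrable (fun ω => Φ (X i ω, V ω)) P := by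
    apply Integrable.mono' hgiint.abs ((hΦmeas.comp hpairmeas).aestronglyMeasurable :
      AEStronglyMeasurable (fun ω => Φ (X i ω, V ω)) P)
    filter_upwards with ω
    show ‖Φ (X i ω, V ω)‖ ≤ |g (X i ω)|
    simp only [hΦ, Real.norm_eq_abs, abs_mul]
    have hb : |∏ j : {x // x ∈ T}, (if X i ω < V ω j then (1:ℝ) else 0)| ≤ 1 := by
      rw [Finset.abs_prod]
      refine Finset.prod_le_one (fun j _ => abs_nonneg _) (fun j _ => ?_)
      split_ifs <;> simp
    calc |g (X i ω)| * |∏ j : {x // x ∈ T}, (if X i ω < V ω j then (1:ℝ) else 0)|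
        ≤ |g (X i ω)| * 1 := mul_le_mul_of_nonneg_left hb (abs_nonneg _)
      _ = |g (X i ω)| := mul_one _
  have hΦint : Integrable Φ (m.prod (P.map V)) := by
    rw [← hmapPair]
    exact (integrable_map_measure hΦmeas.aestronglyMeasurable hpairmeas.aemeasurable).mpr hcompint
  calc ∫ ω, g (X i ω) * ∏ j ∈ T, (if X i ω < X j ω then (1:ℝ) else 0) ∂P
      = ∫ ω, Φ (X i ω, V ω) ∂P :=
        integral_congr_ae (Filter.Eventually.of_forall fun ω => (hcomp ω).symm)
    _ = ∫ p, Φ p ∂(P.map (fun ω => (X i ω, V ω))) :=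
        (integral_map hpairmeas.aemeasurable hΦmeas.aestronglyMeasurable).symm
    _ = ∫ p, Φ p ∂(m.prod (P.map V)) := by rw [hmapPair]
    _ = ∫ x, ∫ v, Φ (x, v) ∂(P.map V) ∂m := integral_prod Φ hΦint
    _ = ∫ x, g x * (1 - F x) ^ T.card ∂m := by
        refine integral_congr_ae (Filter.Eventually.of_forall fun x => ?_)
        have hseteq : {v : {x // x ∈ T} → ℝ | ∀ j : {x // x ∈ T}, x < v j}
            = Set.pi Set.univ (fun _ : {x // x ∈ T} => Set.Ioi x) := by
          ext v; simp [Set.mem_pi]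
        have hset : MeasurableSet {v : {x // x ∈ T} → ℝ | ∀ j : {x // x ∈ T}, x < v j} := by
          rw [hseteq]; exact MeasurableSet.univ_pi fun _ => measurableSet_Ioi
        have h1 : ∀ v : {x // x ∈ T} → ℝ, Φ (x, v)
            = g x * Set.indicator {v : {x // x ∈ T} → ℝ | ∀ j : {x // x ∈ T}, x < v j}
                (fun _ => (1:ℝ)) v := by
          intro v
          simp only [hΦ]
          congr 1
          rw [Finset.prod_boole]
          simp [Set.indicator_apply]
        have hA : (P.map V) {v : {x // x ∈ T} → ℝ | ∀ j : {x // x ∈ T}, x < v j}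
            = (m (Set.Ioi x)) ^ T.card := by
          rw [Measure.map_apply hVmeas hset]
          have hpre : V ⁻¹' {v : {x // x ∈ T} → ℝ | ∀ j : {x // x ∈ T}, x < v j}
              = ⋂ j ∈ T, X j ⁻¹' Set.Ioi x := by
            ext ω
            simp only [hV, Set.mem_preimage, Set.mem_setOf_eq, Set.mem_iInter, Set.mem_Ioi]
            exact ⟨fun h j hj => h ⟨j, hj⟩, fun h j => h j.1 j.2⟩
          rw [hpre, hindep.meas_biInter (fun j hj => ⟨Set.Ioi x, measurableSet_Ioi, rfl⟩)]
          have heach : ∀ j ∈ T, P (X j ⁻¹' Set.Ioi x) = m (Set.Ioi x) := by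
            intro j hj
            rw [hmdef, ← (hid j).map_eq, Measure.map_apply (hm j) measurableSet_Ioi]
          rw [Finset.prod_congr rfl heach, Finset.prod_const]
        calc ∫ v, Φ (x, v) ∂(P.map V)
            = ∫ v, g x * Set.indicator {v : {x // x ∈ T} → ℝ | ∀ j : {x // x ∈ T}, x < v j}
                (fun _ => (1:ℝ)) v ∂(P.map V) := by simp_rw [h1]
          _ = g x * ((P.map V) {v : {x // x ∈ T} → ℝ | ∀ j : {x // x ∈ T}, x < v j}).toReal := by
              rw [integral_const_mul, integral_indicator_const (1:ℝ) hset, measureReal_def]; simp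
          _ = g x * (1 - F x) ^ T.card := by
              rw [hA, ENNReal.toReal_pow, hsurv]
    _ = ∫ ω, g (X i0 ω) * (1 - F (X i0 ω)) ^ T.card ∂P := by
        rw [hmdef, integral_map (hm i0).aemeasurable (f := fun x => g x * (1 - F x) ^ T.card)
          ((hg.mul ((measurable_const.sub hFmeas).pow_const _)).aestronglyMeasurable)]

/-- The U-statistic `Ŝ_ν` with symmetric kernel
`h(x₁, …, x_ν) = (x₁ + ⋯ + x_ν − ν min(x₁, …, x_ν))/ν` built from an i.i.d. sample
`X₁, …, X_n` is an unbiased estimator of the absolute S-Gini index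
`S_ν = −ν Cov(X₁, F̄(X₁)^{ν−1})`. -/
theorem ustatistic_unbiased_for_sgini {Ω : Type*} [MeasurableSpace Ω]
    (P : Measure Ω) [IsProbabilityMeasure P] (n ν : ℕ) (hν : 2 ≤ ν) (hνn : ν ≤ n)
    (X : Fin n → Ω → ℝ) (hm : ∀ i, Measurable (X i))
    (hpos : ∀ i ω, 0 ≤ X i ω)
    (hid : ∀ i, IdentDistrib (X i) (X ⟨0, by omega⟩) P P)
    (hindep : iIndepFun X P)
    (hint : Integrable (X ⟨0, by omega⟩) P)
    (μ : ℝ) (hμ : μ = ∫ ω, X ⟨0, by omega⟩ ω ∂P)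
    (F : ℝ → ℝ) (hF : ∀ x, F x = (P.map (X ⟨0, by omega⟩) (Set.Iic x)).toReal)
    (hFcont : Continuous F) :
    ∫ ω, ((n.choose ν : ℝ))⁻¹ *
        ∑ S ∈ (Finset.powersetCard ν (Finset.univ : Finset (Fin n))).attach,
          ((∑ i ∈ S.1, X i ω) -
              (ν : ℝ) * S.1.inf' (Finset.card_pos.mp
                (by rw [(Finset.mem_powersetCard.mp S.2).2]; omega)) (fun i => X i ω)) /
            (ν : ℝ) ∂P =
      -(ν : ℝ) * ((∫ ω, X ⟨0, by omega⟩ ω * (1 - F (X ⟨0, by omega⟩ ω)) ^ (ν - 1) ∂P) -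
        μ * (∫ ω, (1 - F (X ⟨0, by omega⟩ ω)) ^ (ν - 1) ∂P)) := by
  classical
  have hn0 : 0 < n := by omega
  set i0 : Fin n := ⟨0, hn0⟩ with hi0
  have hid' : ∀ i, IdentDistrib (X i) (X i0) P P := hid
  have hint' : Integrable (X i0) P := hint
  have hμ' : μ = ∫ ω, X i0 ω ∂P := hμ
  have hF' : ∀ x, F x = ((P.map (X i0)) (Set.Iic x)).toReal := hF
  show _ = -(ν : ℝ) * ((∫ ω, X i0 ω * (1 - F (X i0 ω)) ^ (ν - 1) ∂P) -
        μ * (∫ ω, (1 - F (X i0 ω)) ^ (ν - 1) ∂P))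
  have hm0 : Measurable (X i0) := hm i0
  haveI : IsProbabilityMeasure (P.map (X i0)) := Measure.isProbabilityMeasure_map hm0.aemeasurable
  have hXint : ∀ i, Integrable (X i) P := fun i => (hid' i).integrable_iff.mpr hint'
  have hFmeas : Measurable F := hFcont.measurable
  have hsurv : ∀ x, ((P.map (X i0)) (Set.Ioi x)).toReal = 1 - F x := by
    intro x
    rw [← Set.compl_Iic, measure_compl measurableSet_Iic (measure_ne_top _ _),
      measure_univ, ENNReal.toReal_sub_of_le prob_le_one (by simp), ENNReal.toReal_one, hF' x]
  have hatom : ∀ x, (P.map (X i0)) {x} = 0 := fun x => aux_noatom _ F hF' hFcont x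
  have hne : ∀ᵐ ω ∂P, ∀ i j : Fin n, i ≠ j → X i ω ≠ X j ω := by
    rw [ae_all_iff]; intro i; rw [ae_all_iff]; intro j
    by_cases hij : i = j
    · exact Filter.Eventually.of_forall fun ω h => absurd hij h
    · exact (aux_ae_ne P (X i) (X j) (hm i) (hm j) (hindep.indepFun hij)
        (fun x => by rw [(hid' j).map_eq]; exact hatom x)).mono fun ω h _ => h
  have hν0 : (ν:ℝ) ≠ 0 := Nat.cast_ne_zero.mpr (by omega)
  -- the two key integral identities
  have keyA : ∀ (i : Fin n) (T : Finset (Fin n)), i ∉ T → T.card = ν - 1 →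
      ∫ ω, X i ω * ∏ j ∈ T, (if X i ω < X j ω then (1:ℝ) else 0) ∂P
        = ∫ ω, X i0 ω * (1 - F (X i0 ω)) ^ (ν - 1) ∂P := by
    intro i T hiT hc
    have h := aux_key P X hm hindep i0 hid' i T hiT (fun x => x) measurable_id hint' F hFmeas hsurv
    rw [hc] at h
    exact h
  have keyB : ∀ (i : Fin n) (T : Finset (Fin n)), i ∉ T → T.card = ν - 1 →
      ∫ ω, ∏ j ∈ T, (if X i ω < X j ω then (1:ℝ) else 0) ∂P
        = ∫ ω, (1 - F (X i0 ω)) ^ (ν - 1) ∂P := by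
    intro i T hiT hc
    have h := aux_key P X hm hindep i0 hid' i T hiT (fun _ => (1:ℝ)) measurable_const
      (integrable_const 1) F hFmeas hsurv
    simp only [one_mul] at h
    rw [hc] at h
    exact h
  -- integrability facts
  have hprodmeas : ∀ (i : Fin n) (T : Finset (Fin n)),
      Measurable (fun ω => ∏ j ∈ T, (if X i ω < X j ω then (1:ℝ) else 0)) := fun i T =>
    Finset.measurable_prod _ fun j _ =>
      Measurable.ite (measurableSet_lt (hm i) (hm j)) measurable_const measurable_const
  have hprodbd : ∀ (i : Fin n) (T : Finset (Fin n)) (ω : Ω),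
      |∏ j ∈ T, (if X i ω < X j ω then (1:ℝ) else 0)| ≤ 1 := by
    intro i T ω
    rw [Finset.abs_prod]
    refine Finset.prod_le_one (fun j _ => abs_nonneg _) (fun j _ => ?_)
    split_ifs <;> simp
  have hXprodint : ∀ (i : Fin n) (T : Finset (Fin n)),
      Integrable (fun ω => X i ω * ∏ j ∈ T, (if X i ω < X j ω then (1:ℝ) else 0)) P := by
    intro i T
    apply Integrable.mono' (hXint i).abs ((hm i).mul (hprodmeas i T)).aestronglyMeasurable
    filter_upwards with ω
    rw [Real.norm_eq_abs, Pi.mul_apply, abs_mul]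
    calc |X i ω| * |∏ j ∈ T, (if X i ω < X j ω then (1:ℝ) else 0)|
        ≤ |X i ω| * 1 := mul_le_mul_of_nonneg_left (hprodbd i T ω) (abs_nonneg _)
      _ = |X i ω| := mul_one _
  have hprodint : ∀ (i : Fin n) (T : Finset (Fin n)),
      Integrable (fun ω => ∏ j ∈ T, (if X i ω < X j ω then (1:ℝ) else 0)) P := by
    intro i T
    apply Integrable.mono' (integrable_const (1:ℝ)) (hprodmeas i T).aestronglyMeasurable
    filter_upwards with ω
    rw [Real.norm_eq_abs]
    exact hprodbd i T ω
  have hSint : ∀ (S : Finset (Fin n)) (hS : S.Nonempty),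
      Integrable (fun ω => S.inf' hS fun i => X i ω) P := by
    intro S hS
    obtain ⟨a, ha⟩ := hS
    apply Integrable.mono' (hXint a).abs
      (aux_measurable_inf' S _ X hm).aestronglyMeasurable
    filter_upwards with ω
    have h1 : 0 ≤ S.inf' ⟨a, ha⟩ fun i => X i ω := Finset.le_inf' _ _ fun b _ => hpos b ω
    have h2 : (S.inf' ⟨a, ha⟩ fun i => X i ω) ≤ X a ω := Finset.inf'_le _ ha
    rw [Real.norm_eq_abs, abs_of_nonneg h1]
    exact h2.trans (le_abs_self _)
  have hkernelint : ∀ (S : Finset (Fin n)) (hS : S.Nonempty),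
      Integrable (fun ω => ((∑ i ∈ S, X i ω) - (ν:ℝ) * S.inf' hS fun i => X i ω) / (ν:ℝ)) P :=
    fun S hS => (((integrable_finset_sum S fun i _ => hXint i).sub
      ((hSint S hS).const_mul _)).div_const _)
  -- the per-subset value
  have hSval : ∀ (S : Finset (Fin n)) (hS : S.Nonempty), S.card = ν →
      ∫ ω, ((∑ i ∈ S, X i ω) - (ν:ℝ) * S.inf' hS fun i => X i ω) / (ν:ℝ) ∂P =
      -(ν : ℝ) * ((∫ ω, X i0 ω * (1 - F (X i0 ω)) ^ (ν - 1) ∂P) -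
        μ * (∫ ω, (1 - F (X i0 ω)) ^ (ν - 1) ∂P)) := by
    intro S hS hcard
    have hTprop : ∀ i ∈ S, i ∉ S.erase i ∧ (S.erase i).card = ν - 1 := fun i hi =>
      ⟨Finset.notMem_erase i S, by rw [Finset.card_erase_of_mem hi, hcard]⟩
    have hmin_ae : (fun ω => S.inf' hS fun i => X i ω) =ᵐ[P]
        (fun ω => ∑ i ∈ S, X i ω * ∏ j ∈ S.erase i,
          (if X i ω < X j ω then (1:ℝ) else 0)) := by
      filter_upwards [hne] with ω hω
      exact ((aux_min_sum S hS (fun i => X i ω) fun i _ j _ hij => hω i j hij).1).symm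
    have hone_ae : (fun _ : Ω => (1:ℝ)) =ᵐ[P]
        (fun ω => ∑ i ∈ S, ∏ j ∈ S.erase i, (if X i ω < X j ω then (1:ℝ) else 0)) := by
      filter_upwards [hne] with ω hω
      exact ((aux_min_sum S hS (fun i => X i ω) fun i _ j _ hij => hω i j hij).2).symm
    have hmin : ∫ ω, S.inf' hS (fun i => X i ω) ∂P =
        (ν:ℝ) * ∫ ω, X i0 ω * (1 - F (X i0 ω)) ^ (ν - 1) ∂P := by
      rw [integral_congr_ae hmin_ae, integral_finset_sum S (fun i _ => hXprodint i (S.erase i))]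
      rw [Finset.sum_congr rfl (fun i hi => keyA i (S.erase i) (hTprop i hi).1 (hTprop i hi).2)]
      rw [Finset.sum_const, hcard, nsmul_eq_mul]
    have hBone : (ν:ℝ) * ∫ ω, (1 - F (X i0 ω)) ^ (ν - 1) ∂P = 1 := by
      calc (ν:ℝ) * ∫ ω, (1 - F (X i0 ω)) ^ (ν - 1) ∂P
          = ∑ i ∈ S, ∫ ω, ∏ j ∈ S.erase i, (if X i ω < X j ω then (1:ℝ) else 0) ∂P := by
            rw [Finset.sum_congr rfl (fun i hi => keyB i (S.erase i) (hTprop i hi).1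
              (hTprop i hi).2), Finset.sum_const, hcard, nsmul_eq_mul]
        _ = ∫ ω, ∑ i ∈ S, ∏ j ∈ S.erase i, (if X i ω < X j ω then (1:ℝ) else 0) ∂P :=
            (integral_finset_sum S fun i _ => hprodint i (S.erase i)).symm
        _ = ∫ _ : Ω, (1:ℝ) ∂P := (integral_congr_ae hone_ae).symm
        _ = 1 := by simp
    have hsum : ∫ ω, (∑ i ∈ S, X i ω) ∂P = (ν:ℝ) * μ := by
      rw [integral_finset_sum S fun i _ => hXint i]
      rw [Finset.sum_congr rfl fun i _ => ((hid' i).integral_eq).trans hμ'.symm]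
      rw [Finset.sum_const, hcard, nsmul_eq_mul]
    rw [integral_div, integral_sub (integrable_finset_sum S fun i _ => hXint i)
      ((hSint S hS).const_mul _), integral_const_mul, hsum, hmin]
    rw [div_eq_iff hν0]
    linear_combination (-(μ * (ν:ℝ))) * hBone
  -- assemble
  rw [integral_const_mul]
  rw [integral_finset_sum _ (fun S _ => hkernelint S.1 (Finset.card_pos.mp
    (by rw [(Finset.mem_powersetCard.mp S.2).2]; omega)))]
  rw [Finset.sum_congr rfl (fun S _ => hSval S.1 _ (Finset.mem_powersetCard.mp S.2).2)]
  rw [Finset.sum_const, Finset.card_attach, Finset.card_powersetCard, Finset.card_univ,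
    Fintype.card_fin, nsmul_eq_mul, ← mul_assoc, inv_mul_cancel₀
    (Nat.cast_ne_zero.mpr (Nat.choose_pos hνn).ne'), one_mul]
end

section
/- Let X, X2, …, Xν be independent and identically distributed non-negative random variables with continuous distribution function F, survival function F̄ = 1 − F, and finite mean, where ν ≥ 2 is an integer, and let h(y1, …, yν) = (y1 + ⋯ + yν − ν min(y1, …, yν))/ν. Then for every x ≥ 0: E[h(x, X2, …, Xν)] = (1/ν) ( x(1 − ν F̄(x)^{ν−1}) − ν(ν−1) ∫_0^x y F̄(y)^{ν−2} dF(y) ) + ((ν−1)/ν) E(X). -/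
open MeasureTheory ProbabilityTheory

section AuxLemmas
open Set

section aux
variable {μ : Measure ℝ} [IsProbabilityMeasure μ] {F : ℝ → ℝ}
  (hF : ∀ t, F t = (μ (Set.Iic t)).toReal)

include hF

lemma F_nonneg (t : ℝ) : 0 ≤ F t := by rw [hF]; exact ENNReal.toReal_nonneg

lemma F_le_one (t : ℝ) : F t ≤ 1 := by
  rw [hF]
  exact ENNReal.toReal_mono ENNReal.one_ne_top prob_le_one

lemma meas_Ioc_toReal {a b : ℝ} (hab : a ≤ b) :
    (μ (Set.Ioc a b)).toReal = F b - F a := by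
  have h : μ (Set.Iic a) + μ (Set.Ioc a b) = μ (Set.Iic b) := by
    rw [← measure_union (by
      exact Set.disjoint_left.mpr fun z hz hz2 => absurd hz2.1 (not_lt.mpr hz)) measurableSet_Ioc]
    rw [Set.Iic_union_Ioc_eq_Iic hab]
  have h2 : (μ (Set.Iic a)).toReal + (μ (Set.Ioc a b)).toReal = (μ (Set.Iic b)).toReal := by
    rw [← ENNReal.toReal_add (measure_ne_top μ _) (measure_ne_top μ _), h]
  rw [hF, hF]; linarith

lemma meas_Ioi_toReal (t : ℝ) : (μ (Set.Ioi t)).toReal = 1 - F t := by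
  have h : μ (Set.Iic t) + μ (Set.Ioi t) = 1 := by
    rw [← measure_union (by
      exact Set.disjoint_left.mpr fun z hz hz2 => absurd (Set.mem_Ioi.mp hz2) (not_lt.mpr hz)) measurableSet_Ioi,
      Set.Iic_union_Ioi, measure_univ]
  have h2 : (μ (Set.Iic t)).toReal + (μ (Set.Ioi t)).toReal = 1 := by
    rw [← ENNReal.toReal_add (measure_ne_top μ _) (measure_ne_top μ _), h, ENNReal.toReal_one]
  rw [hF]; linarith

lemma noAtoms_of_continuous (hFc : Continuous F) : NoAtoms μ := by
  constructor
  intro z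
  have key : ∀ n : ℕ, (μ {z}).toReal ≤ F z - F (z - 1/(n+1)) := by
    intro n
    have hp : (0:ℝ) < 1/((n:ℝ)+1) := by positivity
    rw [← meas_Ioc_toReal hF (by linarith : z - 1/((n:ℝ)+1) ≤ z)]
    exact ENNReal.toReal_mono (measure_ne_top μ _) (measure_mono (by
      intro w hw
      simp only [Set.mem_singleton_iff] at hw
      subst hw
      exact ⟨by linarith, le_rfl⟩))
  have hlim : Filter.Tendsto (fun n : ℕ => F z - F (z - 1/(n+1))) Filter.atTop (nhds 0) := by
    have h1 : Filter.Tendsto (fun n : ℕ => z - 1/((n:ℝ)+1)) Filter.atTop (nhds z) := by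
      have := tendsto_one_div_add_atTop_nhds_zero_nat (𝕜 := ℝ)
      simpa using Filter.Tendsto.const_sub z this
    have := (hFc.tendsto z).comp h1
    simpa using Filter.Tendsto.const_sub (F z) this
  have hle : (μ {z}).toReal ≤ 0 :=
    ge_of_tendsto hlim (Filter.Eventually.of_forall key)
  have h0 : (μ {z}).toReal = 0 := le_antisymm hle ENNReal.toReal_nonneg
  exact (ENNReal.toReal_eq_zero_iff _).mp h0 |>.resolve_right (measure_ne_top μ _)

end aux

section crux
variable {μ : Measure ℝ} [IsProbabilityMeasure μ] {F : ℝ → ℝ}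
  (hF : ∀ t, F t = (μ (Set.Iic t)).toReal) (hFc : Continuous F)

include hF hFc

lemma crux : ∀ (k : ℕ) (a b : ℝ), a ≤ b →
    ∫ y in Set.Ioc a b, (1 - F y)^k ∂μ
      = ((1 - F a)^(k+1) - (1 - F b)^(k+1))/((k:ℝ)+1) := by
  haveI : NoAtoms μ := noAtoms_of_continuous hF hFc
  intro k
  induction k with
  | zero =>
    intro a b hab
    simp only [pow_zero, pow_one, Nat.cast_zero, zero_add, div_one]
    rw [setIntegral_const, smul_eq_mul, mul_one, measureReal_def, meas_Ioc_toReal hF hab]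
    ring
  | succ k ih =>
    intro a b hab
    set G : ℝ → ℝ := fun y => 1 - F y with hG
    have hGm : Measurable G := (measurable_const.sub hFc.measurable)
    have hG0 : ∀ y, 0 ≤ G y := fun y => by
      have := F_le_one hF y; simp [hG]; linarith
    have hG1 : ∀ y, G y ≤ 1 := fun y => by
      have := F_nonneg hF y; simp [hG]; linarith
    -- rewrite integrand on the set
    have e2 : ∫ y in Set.Ioc a b, G y^(k+1) ∂μ
        = ∫ y in Set.Ioc a b, (G y^k * G b + G y^k * (F b - F y)) ∂μ := by
      apply setIntegral_congr_fun measurableSet_Ioc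
      intro y hy
      have : G y = G b + (F b - F y) := by simp only [hG]; ring
      calc G y^(k+1) = G y^k * G y := by ring
        _ = G y^k * G b + G y^k * (F b - F y) := by rw [this]; ring
    -- integrability helpers
    have hintc : ∀ (c : ℝ), Integrable (fun y => G y^k * c) (μ.restrict (Set.Ioc a b)) := by
      intro c
      refine Integrable.mono' (integrable_const (|c|)) ((hGm.pow_const k).mul_const c).aestronglyMeasurable ?_
      refine Filter.Eventually.of_forall fun y => ?_
      rw [Real.norm_eq_abs, abs_mul]
      have h1 : |G y ^ k| ≤ 1 := by
        rw [abs_of_nonneg (pow_nonneg (hG0 y) k)]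
        exact pow_le_one₀ (hG0 y) (hG1 y)
      nlinarith [abs_nonneg c, abs_nonneg (G y ^ k)]
    have hintF : Integrable (fun y => G y^k * (F b - F y)) (μ.restrict (Set.Ioc a b)) := by
      refine Integrable.mono' (integrable_const 2) ((hGm.pow_const k).mul
        (measurable_const.sub hFc.measurable)).aestronglyMeasurable ?_
      refine Filter.Eventually.of_forall fun y => ?_
      rw [Real.norm_eq_abs, abs_mul]
      have h1 : |G y ^ k| ≤ 1 := by
        rw [abs_of_nonneg (pow_nonneg (hG0 y) k)]
        exact pow_le_one₀ (hG0 y) (hG1 y)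
      have h2 : |F b - F y| ≤ 2 := by
        have := F_le_one hF b; have := F_nonneg hF b
        have := F_le_one hF y; have := F_nonneg hF y
        rw [abs_le]; constructor <;> linarith
      nlinarith [abs_nonneg (G y ^ k), abs_nonneg (F b - F y)]
    have e3 : ∫ y in Set.Ioc a b, G y^(k+1) ∂μ
        = (∫ y in Set.Ioc a b, G y^k ∂μ) * G b
          + ∫ y in Set.Ioc a b, G y^k * (F b - F y) ∂μ := by
      rw [e2, integral_add (hintc (G b)) hintF, integral_mul_const]
    -- Fubini for J
    have hJ : ∫ y in Set.Ioc a b, G y^k * (F b - F y) ∂μ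
        = ∫ z in Set.Ioc a b, ((1 - F a)^(k+1) - (1 - F z)^(k+1))/((k:ℝ)+1) ∂μ := by
      have hswap : ∫ y in Set.Ioc a b, (∫ z in Set.Ioc a b,
            G y^k * (if y < z then (1:ℝ) else 0) ∂μ) ∂μ
          = ∫ z in Set.Ioc a b, (∫ y in Set.Ioc a b,
            G y^k * (if y < z then (1:ℝ) else 0) ∂μ) ∂μ := by
        apply integral_integral_swap
        have hm : Measurable (Function.uncurry (fun y z =>
            G y^k * (if y < z then (1:ℝ) else 0))) := by
          apply Measurable.mul
          · exact (hGm.comp measurable_fst).pow_const k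
          · exact Measurable.ite (measurableSet_lt measurable_fst measurable_snd)
              measurable_const measurable_const
        refine Integrable.mono' (integrable_const 1) hm.aestronglyMeasurable ?_
        refine Filter.Eventually.of_forall fun p => ?_
        simp only [Function.uncurry]
        rw [Real.norm_eq_abs, abs_mul]
        have h1 : |G p.1 ^ k| ≤ 1 := by
          rw [abs_of_nonneg (pow_nonneg (hG0 p.1) k)]
          exact pow_le_one₀ (hG0 p.1) (hG1 p.1)
        have h2 : |(if p.1 < p.2 then (1:ℝ) else 0)| ≤ 1 := by
          split <;> simp
        nlinarith [abs_nonneg (G p.1 ^ k), abs_nonneg (if p.1 < p.2 then (1:ℝ) else 0)]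
      -- LHS of swap equals J
      have hinner1 : ∀ y ∈ Set.Ioc a b, (∫ z in Set.Ioc a b,
            G y^k * (if y < z then (1:ℝ) else 0) ∂μ) = G y^k * (F b - F y) := by
        intro y hy
        rw [integral_const_mul]
        congr 1
        have : (fun z => if y < z then (1:ℝ) else 0)
            = Set.indicator (Set.Ioi y) (fun _ => (1:ℝ)) := by
          ext z; simp [Set.indicator_apply, Set.mem_Ioi]
        rw [this, integral_indicator measurableSet_Ioi]
        rw [setIntegral_const, smul_eq_mul, mul_one, measureReal_def,
          Measure.restrict_apply measurableSet_Ioi]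
        have hset : Set.Ioi y ∩ Set.Ioc a b = Set.Ioc y b := by
          ext z
          simp only [Set.mem_inter_iff, Set.mem_Ioi, Set.mem_Ioc]
          constructor
          · rintro ⟨h1, _, h3⟩; exact ⟨h1, h3⟩
          · rintro ⟨h1, h2⟩; exact ⟨h1, lt_of_lt_of_le hy.1 (le_of_lt h1), h2⟩
        rw [hset, meas_Ioc_toReal hF hy.2]
      have hinner2 : ∀ z ∈ Set.Ioc a b, (∫ y in Set.Ioc a b,
            G y^k * (if y < z then (1:ℝ) else 0) ∂μ)
          = ((1 - F a)^(k+1) - (1 - F z)^(k+1))/((k:ℝ)+1) := by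
        intro z hz
        have : (fun y => G y^k * (if y < z then (1:ℝ) else 0))
            = Set.indicator (Set.Iio z) (fun y => G y^k) := by
          ext y
          simp only [Set.indicator_apply, Set.mem_Iio]
          split <;> simp
        rw [this, integral_indicator measurableSet_Iio,
          Measure.restrict_restrict measurableSet_Iio]
        have hset : Set.Iio z ∩ Set.Ioc a b = Set.Ioo a z := by
          ext y
          simp only [Set.mem_inter_iff, Set.mem_Iio, Set.mem_Ioo, Set.mem_Ioc]
          constructor
          · rintro ⟨h1, h2, _⟩; exact ⟨h2, h1⟩
          · rintro ⟨h1, h2⟩; exact ⟨h2, h1, le_trans (le_of_lt h2) hz.2⟩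
        rw [hset, ← integral_Ioc_eq_integral_Ioo' (NullSingletonClass.measure_singleton (self := ‹NoAtoms μ›) z)]
        exact ih a z (le_of_lt hz.1)
      calc ∫ y in Set.Ioc a b, G y^k * (F b - F y) ∂μ
          = ∫ y in Set.Ioc a b, (∫ z in Set.Ioc a b,
              G y^k * (if y < z then (1:ℝ) else 0) ∂μ) ∂μ :=
            (setIntegral_congr_fun measurableSet_Ioc hinner1).symm
        _ = ∫ z in Set.Ioc a b, (∫ y in Set.Ioc a b,
              G y^k * (if y < z then (1:ℝ) else 0) ∂μ) ∂μ := hswap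
        _ = ∫ z in Set.Ioc a b, ((1 - F a)^(k+1) - (1 - F z)^(k+1))/((k:ℝ)+1) ∂μ :=
            setIntegral_congr_fun measurableSet_Ioc hinner2
    -- evaluate the RHS of hJ
    have hGpow_int : Integrable (fun z => (1 - F z)^(k+1)) (μ.restrict (Set.Ioc a b)) := by
      refine Integrable.mono' (integrable_const 1)
        ((measurable_const.sub hFc.measurable).pow_const (k+1)).aestronglyMeasurable ?_
      refine Filter.Eventually.of_forall fun z => ?_
      rw [Real.norm_eq_abs, abs_of_nonneg (pow_nonneg (hG0 z) (k+1))]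
      exact pow_le_one₀ (hG0 z) (hG1 z)
    have hJ2 : ∫ z in Set.Ioc a b, ((1 - F a)^(k+1) - (1 - F z)^(k+1))/((k:ℝ)+1) ∂μ
        = ((1 - F a)^(k+1) * (F b - F a) - ∫ z in Set.Ioc a b, (1 - F z)^(k+1) ∂μ)/((k:ℝ)+1) := by
      rw [integral_div, integral_sub (integrable_const _) hGpow_int, setIntegral_const,
        smul_eq_mul, measureReal_def, meas_Ioc_toReal hF hab]
      ring
    -- put together and solve
    have hIk : ∫ y in Set.Ioc a b, G y^k ∂μ
        = ((1 - F a)^(k+1) - (1 - F b)^(k+1))/((k:ℝ)+1) := ih a b hab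
    set I := ∫ y in Set.Ioc a b, (1 - F y)^(k+1) ∂μ with hI
    rw [hJ, hJ2, hIk] at e3
    have hGb : G b = 1 - F b := rfl
    rw [hGb] at e3
    have hc : ((k:ℝ)+1) ≠ 0 := by positivity
    field_simp at e3
    push_cast
    rw [eq_div_iff (by positivity : ((k:ℝ)+1+1) ≠ 0)]
    linear_combination e3
end crux

section step2
variable {μ : Measure ℝ} [IsProbabilityMeasure μ] {F : ℝ → ℝ}
  (hF : ∀ t, F t = (μ (Set.Iic t)).toReal) (hFc : Continuous F)

include hF hFc

lemma icc_integral {x : ℝ} (hx : 0 ≤ x) (m : ℕ) (hm : 1 ≤ m) :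
    (m:ℝ) * ∫ y in Set.Icc 0 x, y * (1 - F y)^(m-1) ∂μ
      = (∫ t in Set.Ioc 0 x, (1 - F t)^m) - x * (1 - F x)^m := by
  haveI : NoAtoms μ := noAtoms_of_continuous hF hFc
  set G : ℝ → ℝ := fun y => 1 - F y with hG
  have hGm : Measurable G := measurable_const.sub hFc.measurable
  have hG0 : ∀ y, 0 ≤ G y := fun y => by
    have := F_le_one hF y; simp only [hG]; linarith
  have hG1 : ∀ y, G y ≤ 1 := fun y => by
    have := F_nonneg hF y; simp only [hG]; linarith
  have habs : ∀ (y : ℝ) (j : ℕ), |G y ^ j| ≤ 1 := fun y j => by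
    rw [abs_of_nonneg (pow_nonneg (hG0 y) j)]
    exact pow_le_one₀ (hG0 y) (hG1 y)
  haveI hfin : IsFiniteMeasure (volume.restrict (Set.Ioc 0 x)) := by
    constructor
    rw [Measure.restrict_apply_univ, Real.volume_Ioc]
    exact ENNReal.ofReal_lt_top
  -- step 1 : replace y by an inner integral
  have e1 : ∫ y in Set.Icc 0 x, y * G y^(m-1) ∂μ
      = ∫ y in Set.Icc 0 x, (∫ t in Set.Ioc 0 x,
          (if t < y then (1:ℝ) else 0) * G y^(m-1)) ∂μ := by
    apply setIntegral_congr_fun measurableSet_Icc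
    intro y hy
    dsimp only
    rw [integral_mul_const]
    congr 1
    have : (fun t => if t < y then (1:ℝ) else 0)
        = Set.indicator (Set.Iio y) (fun _ => (1:ℝ)) := by
      ext t; simp [Set.indicator_apply, Set.mem_Iio]
    rw [this, integral_indicator measurableSet_Iio, setIntegral_const, smul_eq_mul, mul_one, measureReal_def,
      Measure.restrict_apply measurableSet_Iio]
    have hset : Set.Iio y ∩ Set.Ioc 0 x = Set.Ioo 0 y := by
      ext t
      simp only [Set.mem_inter_iff, Set.mem_Iio, Set.mem_Ioc, Set.mem_Ioo]
      constructor
      · rintro ⟨h1, h2, _⟩; exact ⟨h2, h1⟩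
      · rintro ⟨h1, h2⟩; exact ⟨h2, h1, le_trans (le_of_lt h2) hy.2⟩
    rw [hset, Real.volume_Ioo, ENNReal.toReal_ofReal (by linarith [hy.1])]
    simp
  -- step 2 : Fubini
  have e2 : ∫ y in Set.Icc 0 x, (∫ t in Set.Ioc 0 x,
        (if t < y then (1:ℝ) else 0) * G y^(m-1)) ∂μ
      = ∫ t in Set.Ioc 0 x, (∫ y in Set.Icc 0 x,
        (if t < y then (1:ℝ) else 0) * G y^(m-1) ∂μ) := by
    apply integral_integral_swap
    have hmeas : Measurable (Function.uncurry (fun y t =>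
        (if t < y then (1:ℝ) else 0) * G y^(m-1))) := by
      apply Measurable.mul
      · exact Measurable.ite (measurableSet_lt measurable_snd measurable_fst)
          measurable_const measurable_const
      · exact (hGm.comp measurable_fst).pow_const (m-1)
    refine Integrable.mono' (integrable_const 1) hmeas.aestronglyMeasurable ?_
    refine Filter.Eventually.of_forall fun p => ?_
    simp only [Function.uncurry]
    rw [Real.norm_eq_abs, abs_mul]
    have h2 : |(if p.2 < p.1 then (1:ℝ) else 0)| ≤ 1 := by split <;> simp
    nlinarith [habs p.1 (m-1), abs_nonneg (if p.2 < p.1 then (1:ℝ) else 0),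
      abs_nonneg (G p.1 ^ (m-1))]
  -- step 3 : inner integral via crux
  have e3 : ∀ t ∈ Set.Ioc 0 x, (∫ y in Set.Icc 0 x,
        (if t < y then (1:ℝ) else 0) * G y^(m-1) ∂μ)
      = (G t^m - G x^m)/(m:ℝ) := by
    intro t ht
    have : (fun y => (if t < y then (1:ℝ) else 0) * G y^(m-1))
        = Set.indicator (Set.Ioi t) (fun y => G y^(m-1)) := by
      ext y
      simp only [Set.indicator_apply, Set.mem_Ioi]
      split <;> simp
    rw [this, integral_indicator measurableSet_Ioi,
      Measure.restrict_restrict measurableSet_Ioi]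
    have hset : Set.Ioi t ∩ Set.Icc 0 x = Set.Ioc t x := by
      ext y
      simp only [Set.mem_inter_iff, Set.mem_Ioi, Set.mem_Icc, Set.mem_Ioc]
      constructor
      · rintro ⟨h1, _, h3⟩; exact ⟨h1, h3⟩
      · rintro ⟨h1, h2⟩; exact ⟨h1, le_of_lt (lt_trans ht.1 h1), h2⟩
    rw [hset, crux hF hFc (m-1) t x ht.2]
    rw [Nat.sub_add_cancel hm]
    congr 1
    rw [Nat.cast_sub hm, Nat.cast_one]
    ring
  -- step 4 : compute the t-integral
  have hGint : Integrable (fun t => G t^m) (volume.restrict (Set.Ioc 0 x)) := by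
    refine Integrable.mono' (integrable_const 1)
      ((hGm.pow_const m).aestronglyMeasurable) ?_
    exact Filter.Eventually.of_forall fun t => by
      rw [Real.norm_eq_abs]; exact habs t m
  have e4 : ∫ t in Set.Ioc 0 x, (G t^m - G x^m)/(m:ℝ)
      = ((∫ t in Set.Ioc 0 x, G t^m) - x * G x^m)/(m:ℝ) := by
    rw [integral_div, integral_sub hGint (integrable_const _), setIntegral_const,
      smul_eq_mul, Real.volume_real_Ioc_of_le hx]
    ring
  have hm0 : (m:ℝ) ≠ 0 := Nat.cast_ne_zero.mpr (by omega)
  rw [e1, e2, setIntegral_congr_fun measurableSet_Ioc e3, e4]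
  field_simp
  rfl
end step2

end AuxLemmas

/-- For `X, X₂, …, X_ν` i.i.d. non-negative random variables with
continuous distribution function `F`, survival function `F̄ = 1 − F` and finite mean, and
kernel `h(y₁, …, y_ν) = (y₁ + ⋯ + y_ν − ν min(y₁, …, y_ν))/ν`, for every `x ≥ 0`:
`E[h(x, X₂, …, X_ν)] = (1/ν)(x(1 − νF̄(x)^{ν−1}) − ν(ν−1)∫_0^x y F̄(y)^{ν−2} dF(y)) + ((ν−1)/ν) E(X)`. -/
theorem kernel_first_projection {Ω : Type*} [MeasurableSpace Ω]
    (P : Measure Ω) [IsProbabilityMeasure P] (ν : ℕ) (hν : 2 ≤ ν)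
    (X : Ω → ℝ) (Y : Fin (ν - 1) → Ω → ℝ)
    (hmX : Measurable X) (hm : ∀ i, Measurable (Y i))
    (hposX : ∀ ω, 0 ≤ X ω) (hpos : ∀ i ω, 0 ≤ Y i ω)
    (hid : ∀ i, IdentDistrib (Y i) X P P)
    (hindep : iIndepFun Y P)
    (hint : Integrable X P)
    (F : ℝ → ℝ) (hF : ∀ t, F t = (P.map X (Set.Iic t)).toReal)
    (hFcont : Continuous F)
    (x : ℝ) (hx : 0 ≤ x) :
    ∫ ω, ((x + ∑ i, Y i ω) - (ν : ℝ) * min x (⨅ i, Y i ω)) / (ν : ℝ) ∂P =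
      (1 / (ν : ℝ)) *
          (x * (1 - (ν : ℝ) * (1 - F x) ^ (ν - 1)) -
            (ν : ℝ) * ((ν : ℝ) - 1) *
              ∫ y in Set.Icc 0 x, y * (1 - F y) ^ (ν - 2) ∂(P.map X)) +
        (((ν : ℝ) - 1) / (ν : ℝ)) * ∫ ω, X ω ∂P := by
  haveI hne : Nonempty (Fin (ν - 1)) := Fin.pos_iff_nonempty.mp (by omega)
  set μ := P.map X with hμ
  haveI : IsProbabilityMeasure μ := Measure.isProbabilityMeasure_map hmX.aemeasurable
  set f : Ω → ℝ := fun ω => min x (⨅ i, Y i ω) with hfdef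
  have hfmeas : Measurable f := measurable_const.min (Measurable.iInf hm)
  have hf0 : ∀ ω, 0 ≤ f ω := fun ω => le_min hx (le_ciInf fun i => hpos i ω)
  have hfx : ∀ ω, f ω ≤ x := fun ω => min_le_left _ _
  have hfint : Integrable f P := by
    refine Integrable.mono' (integrable_const x) hfmeas.aestronglyMeasurable ?_
    exact Filter.Eventually.of_forall fun ω => by
      rw [Real.norm_eq_abs, abs_of_nonneg (hf0 ω)]; exact hfx ω
  -- t < ⨅ iff ∀ i
  have hlt_iInf : ∀ (a : Ω) (t : ℝ), t < ⨅ i, Y i a ↔ ∀ i, t < Y i a := by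
    intro a t
    constructor
    · intro h i
      exact lt_of_lt_of_le h (ciInf_le (Set.Finite.bddBelow (Set.finite_range _)) i)
    · intro h
      obtain ⟨j, hj⟩ := exists_eq_ciInf_of_finite (f := fun i => Y i a)
      rw [← hj]; exact h j
  -- survival function of the min
  have hYmap : ∀ (i) (t : ℝ), P (Y i ⁻¹' Set.Ioi t) = μ (Set.Ioi t) := by
    intro i t
    rw [← Measure.map_apply (hm i) measurableSet_Ioi, (hid i).map_eq]
  have hsurv : ∀ t : ℝ, P {a | ∀ i, t < Y i a} = (μ (Set.Ioi t))^(ν-1) := by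
    intro t
    have : {a | ∀ i, t < Y i a} = ⋂ i, Y i ⁻¹' Set.Ioi t := by
      ext a; simp [Set.mem_iInter]
    rw [this, hindep.meas_iInter (fun i => ⟨Set.Ioi t, measurableSet_Ioi, rfl⟩)]
    simp only [hYmap]
    rw [Finset.prod_const, Finset.card_univ, Fintype.card_fin]
  -- layer cake
  have hlayer : ∫ ω, f ω ∂P
      = ∫ t in Set.Ioi (0:ℝ), (P {a | t < f a}).toReal :=
    hfint.integral_eq_integral_meas_lt (Filter.Eventually.of_forall hf0)
  have hval : ∀ t : ℝ, t ∈ Set.Ioi (0:ℝ) → t ≠ x →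
      (P {a | t < f a}).toReal
        = Set.indicator (Set.Ioc 0 x) (fun t => (1 - F t)^(ν-1)) t := by
    intro t ht htx
    rcases lt_or_gt_of_ne htx with hlt | hgt
    · have hset : {a | t < f a} = {a | ∀ i, t < Y i a} := by
        ext a
        simp only [hfdef, Set.mem_setOf_eq, lt_min_iff, hlt_iInf]
        exact ⟨fun h => h.2, fun h => ⟨hlt, h⟩⟩
      rw [hset, hsurv, Set.indicator_of_mem (Set.mem_Ioc.mpr ⟨ht, le_of_lt hlt⟩),
        ENNReal.toReal_pow, meas_Ioi_toReal hF t]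
    · have hset : {a | t < f a} = ∅ := by
        ext a
        simp only [Set.mem_setOf_eq, Set.mem_empty_iff_false, iff_false, not_lt]
        exact le_trans (hfx a) (le_of_lt hgt)
      rw [hset, Set.indicator_of_notMem (by
        simp only [Set.mem_Ioc, not_and, not_le]
        intro _; exact hgt)]
      simp
  have hae : ∀ᵐ t : ℝ, t ≠ x := by
    refine ae_iff.mpr ?_
    simp only [ne_eq, not_not, Set.setOf_eq_eq_singleton]
    exact measure_singleton x
  have hEmin : ∫ ω, f ω ∂P = ∫ t in Set.Ioc 0 x, (1 - F t)^(ν-1) := by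
    rw [hlayer]
    rw [setIntegral_congr_ae measurableSet_Ioi
      (by filter_upwards [hae] with t htx ht; exact hval t ht htx)]
    rw [integral_indicator measurableSet_Ioc, Measure.restrict_restrict measurableSet_Ioc,
      Set.inter_eq_self_of_subset_left Set.Ioc_subset_Ioi_self]
  -- combine with the Fubini identity
  have hF' : ∀ t, F t = (μ (Set.Iic t)).toReal := hF
  have hicc := icc_integral hF' hFcont hx (ν-1) (by omega)
  have hexp : ν - 1 - 1 = ν - 2 := by omega
  rw [hexp] at hicc
  have hEmin2 : ∫ ω, f ω ∂P
      = x * (1 - F x)^(ν-1)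
        + ((ν-1 : ℕ):ℝ) * ∫ y in Set.Icc 0 x, y * (1 - F y) ^ (ν - 2) ∂μ := by
    rw [hEmin]; linarith [hicc]
  -- decompose the LHS
  have hintY : ∀ i, Integrable (Y i) P := fun i => (hid i).integrable_iff.mpr hint
  have hSint : Integrable (fun ω => x + ∑ i, Y i ω) P :=
    (integrable_const x).add (integrable_finset_sum _ fun i _ => hintY i)
  have hLHS : ∫ ω, ((x + ∑ i, Y i ω) - (ν : ℝ) * f ω) / (ν : ℝ) ∂P
      = ((x + ((ν-1 : ℕ):ℝ) * ∫ ω, X ω ∂P) - (ν : ℝ) * ∫ ω, f ω ∂P) / (ν : ℝ) := by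
    rw [integral_div, integral_sub hSint (hfint.const_mul _), integral_add (integrable_const x)
      (integrable_finset_sum _ fun i _ => hintY i), integral_const, integral_finset_sum _
      (fun i _ => hintY i), integral_const_mul]
    congr 3
    · simp
    · calc ∑ i : Fin (ν-1), ∫ ω, Y i ω ∂P = ∑ _i : Fin (ν-1), ∫ ω, X ω ∂P :=
          Finset.sum_congr rfl fun i _ => (hid i).integral_eq
        _ = ((ν-1 : ℕ):ℝ) * ∫ ω, X ω ∂P := by
          rw [Finset.sum_const, Finset.card_univ, Fintype.card_fin, nsmul_eq_mul]
  rw [hLHS, hEmin2]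
  have hcast : ((ν-1 : ℕ):ℝ) = (ν:ℝ) - 1 := by
    rw [Nat.cast_sub (by omega), Nat.cast_one]
  rw [hcast]
  have hν0 : (ν:ℝ) ≠ 0 := Nat.cast_ne_zero.mpr (by omega)
  field_simp
  ring
end

section
/- Let X1, X2, … be independent and identically distributed non-negative random variables with continuous distribution function F, survival function F̄ = 1 − F, finite second moment and positive mean μ, let ν ≥ 2 be an integer, let R_ν = (−ν/μ) Cov(X1, F̄(X1)^{ν−1}), and let F̄_n(x) = (1/n) Σ_{i=1}^n 1{Xi > x} be the empirical survival function. Define Ĉ(Xi, R_ν) = (1 − ν F̄_n(Xi)^{ν−1}) Xi − R_ν Xi. Then (1/n) Σ_{i=1}^n Ĉ²(Xi, R_ν) converges in probability, as n → ∞, to σ₁² = Var( (1 − ν F̄(X1)^{ν−1} − R_ν) X1 ) = E[ ((1 − ν F̄(X1)^{ν−1} − R_ν) X1)² ]. -/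
open MeasureTheory ProbabilityTheory Filter Set Topology

lemma aux_pow_abs_sub_le {a b : ℝ} (k : ℕ) (ha0 : 0 ≤ a) (ha1 : a ≤ 1)
    (hb0 : 0 ≤ b) (hb1 : b ≤ 1) : |a ^ k - b ^ k| ≤ k * |a - b| := by
  induction k with
  | zero => simp
  | succ n ih =>
    have h1 : a ^ (n+1) - b ^ (n+1) = a * (a ^ n - b ^ n) + (a - b) * b ^ n := by ring
    have hbn0 : 0 ≤ b ^ n := pow_nonneg hb0 n
    have hbn1 : b ^ n ≤ 1 := pow_le_one₀ hb0 hb1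
    have h2 : |a ^ (n+1) - b ^ (n+1)| ≤ |a * (a ^ n - b ^ n)| + |(a - b) * b ^ n| := by
      rw [h1]; exact abs_add_le _ _
    have h3 : |a * (a ^ n - b ^ n)| ≤ |a ^ n - b ^ n| := by
      rw [abs_mul, abs_of_nonneg ha0]
      exact mul_le_of_le_one_left (abs_nonneg _) ha1
    have h4 : |(a - b) * b ^ n| ≤ |a - b| := by
      rw [abs_mul, abs_of_nonneg hbn0]
      exact mul_le_of_le_one_right (abs_nonneg _) hbn1
    push_cast
    nlinarith [ih, abs_nonneg (a - b)]

lemma aux_tendstoInMeasure_zero {Ω : Type*} [MeasurableSpace Ω] (P : Measure Ω)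
    [IsProbabilityMeasure P] (f : ℕ → Ω → ℝ) (hnn : ∀ n ω, 0 ≤ f n ω)
    (hint : ∀ n, Integrable (f n) P)
    (h : Tendsto (fun n => ∫ ω, f n ω ∂P) atTop (𝓝 0)) :
    TendstoInMeasure P f atTop (fun _ => (0 : ℝ)) := by
  rw [tendstoInMeasure_iff_dist]
  intro ε hε
  have hne : ∀ n, P { x | ε ≤ dist (f n x) 0 } ≠ ⊤ := fun n => measure_ne_top _ _
  rw [← ENNReal.tendsto_toReal_iff hne ENNReal.zero_ne_top]
  simp only [ENNReal.toReal_zero]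
  have hb : ∀ n, (P { x | ε ≤ dist (f n x) 0 }).toReal ≤ (∫ ω, f n ω ∂P) / ε := by
    intro n
    have hset : { x | ε ≤ dist (f n x) 0 } = { x | ε ≤ f n x } := by
      ext x
      simp only [mem_setOf_eq, Real.dist_eq, sub_zero, abs_of_nonneg (hnn n x)]
    rw [hset]
    have h2 := mul_meas_ge_le_integral_of_nonneg (ae_of_all P (hnn n)) (hint n) ε
    rw [le_div_iff₀' hε]
    exact h2
  have h0 : Tendsto (fun n => (∫ ω, f n ω ∂P) / ε) atTop (𝓝 0) := by
    simpa using h.div_const ε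
  exact squeeze_zero (fun n => ENNReal.toReal_nonneg) hb h0

lemma aux_combine {Ω : Type*} [MeasurableSpace Ω] (P : Measure Ω) [IsProbabilityMeasure P]
    (A B S T : ℕ → Ω → ℝ) (c σ : ℝ)
    (hSnn : ∀ n ω, 0 ≤ S n ω) (hTnn : ∀ n ω, 0 ≤ T n ω)
    (hbound : ∀ n ω, |A n ω - B n ω| ^ 2 ≤ S n ω * T n ω)
    (hS : TendstoInMeasure P S atTop (fun _ => (0 : ℝ)))
    (hT : TendstoInMeasure P T atTop (fun _ => c))
    (hB : TendstoInMeasure P B atTop (fun _ => σ)) :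
    TendstoInMeasure P A atTop (fun _ => σ) := by
  rw [tendstoInMeasure_iff_dist] at hS hT hB ⊢
  intro ε hε
  set M : ℝ := |c| + 1 with hM
  have hMpos : 0 < M := by positivity
  set δ : ℝ := ε ^ 2 / (4 * M) with hδ
  have hδpos : 0 < δ := by positivity
  have hsub : ∀ n, { x | ε ≤ dist (A n x) σ } ⊆
      { x | ε / 2 ≤ dist (B n x) σ } ∪ ({ x | δ ≤ dist (S n x) 0 } ∪ { x | 1 ≤ dist (T n x) c }) := by
    intro n x hx
    simp only [mem_setOf_eq, mem_union] at hx ⊢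
    by_contra hcon
    push_neg at hcon
    obtain ⟨h1, h2, h3⟩ := hcon
    rw [Real.dist_eq] at h1 h2 h3 hx
    rw [sub_zero, abs_of_nonneg (hSnn n x)] at h2
    have hTle : T n x < M := by
      rw [hM]
      cases' abs_lt.mp h3 with l r
      nlinarith [neg_abs_le c, le_abs_self c]
    have hAB2 : |A n x - B n x| ^ 2 < ε ^ 2 / 4 := by
      calc |A n x - B n x| ^ 2 ≤ S n x * T n x := hbound n x
        _ ≤ S n x * M := by
            apply mul_le_mul_of_nonneg_left hTle.le (hSnn n x)
        _ < δ * M := by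
            apply mul_lt_mul_of_pos_right h2 hMpos
        _ = ε ^ 2 / 4 := by
            rw [hδ]; field_simp
    have hAB : |A n x - B n x| < ε / 2 := by
      have h4 : |A n x - B n x| ^ 2 < (ε / 2) ^ 2 := by
        rw [div_pow]; convert hAB2 using 2; norm_num
      exact lt_of_pow_lt_pow_left₀ 2 (by positivity) h4
    have : |A n x - σ| < ε :=
      calc |A n x - σ| ≤ |A n x - B n x| + |B n x - σ| := abs_sub_le _ _ _
        _ < ε / 2 + ε / 2 := add_lt_add hAB h1
        _ = ε := by ring
    linarith
  have hmb : ∀ n, P { x | ε ≤ dist (A n x) σ } ≤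
      P { x | ε / 2 ≤ dist (B n x) σ } + (P { x | δ ≤ dist (S n x) 0 } + P { x | 1 ≤ dist (T n x) c }) := by
    intro n
    calc P { x | ε ≤ dist (A n x) σ } ≤
        P ({ x | ε / 2 ≤ dist (B n x) σ } ∪ ({ x | δ ≤ dist (S n x) 0 } ∪ { x | 1 ≤ dist (T n x) c })) :=
          measure_mono (hsub n)
      _ ≤ _ := le_trans (measure_union_le _ _) (by gcongr; exact measure_union_le _ _)
  have hlim : Tendsto (fun n => P { x | ε / 2 ≤ dist (B n x) σ } +
      (P { x | δ ≤ dist (S n x) 0 } + P { x | 1 ≤ dist (T n x) c })) atTop (𝓝 0) := by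
    have l1 := hB (ε / 2) (by positivity)
    have l2 := hS δ hδpos
    have l3 := hT 1 one_pos
    have := l1.add (l2.add l3)
    simpa using this
  exact tendsto_of_tendsto_of_tendsto_of_le_of_le tendsto_const_nhds hlim
    (fun n => zero_le) hmb

lemma aux_measure_gt (μ₀ : Measure ℝ) [IsProbabilityMeasure μ₀] (F : ℝ → ℝ)
    (hF : ∀ t, F t = (μ₀ (Iic t)).toReal) (hFc : Continuous F)
    {s : ℝ} (hs0 : 0 < s) (hs1 : s < 1) :
    μ₀ {x | s < 1 - F x} = ENNReal.ofReal (1 - s) := by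
  set A : Set ℝ := {x | s < 1 - F x} with hA
  have hmono : Monotone F := by
    intro a b hab
    rw [hF a, hF b]
    exact ENNReal.toReal_mono (measure_ne_top _ _) (measure_mono (Iic_subset_Iic.mpr hab))
  -- F tends to 0 at -infty
  have hbot : Tendsto F atBot (𝓝 0) := by
    have h1 : Tendsto (fun x : ℝ => μ₀ (Iic x)) atBot (𝓝 (μ₀ (⋂ x : ℝ, Iic x))) := by
      apply tendsto_measure_iInter_atBot
      · exact fun x => measurableSet_Iic.nullMeasurableSet
      · exact fun a b hab => Iic_subset_Iic.mpr hab
      · exact ⟨0, measure_ne_top _ _⟩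
    have h2 : (⋂ x : ℝ, Iic x) = ∅ := by
      ext y; simp only [mem_iInter, mem_Iic, mem_empty_iff_false, iff_false, not_forall, not_le]
      exact ⟨y - 1, by linarith⟩
    rw [h2, measure_empty] at h1
    have h3 := (ENNReal.tendsto_toReal (by simp)).comp h1
    rw [show F = ENNReal.toReal ∘ (fun x : ℝ => μ₀ (Iic x)) from funext fun t => hF t]
    simpa using h3
  -- F tends to 1 at +infty
  have htop : Tendsto F atTop (𝓝 1) := by
    have h1 : Tendsto (fun x : ℝ => μ₀ (Iic x)) atTop (𝓝 (μ₀ univ)) :=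
      tendsto_measure_Iic_atTop μ₀
    rw [measure_univ] at h1
    have h3 := (ENNReal.tendsto_toReal (by simp)).comp h1
    rw [show F = ENNReal.toReal ∘ (fun x : ℝ => μ₀ (Iic x)) from funext fun t => hF t]
    simpa using h3
  -- A is nonempty
  have hne : A.Nonempty := by
    have : ∀ᶠ x in atBot, F x < 1 - s := hbot.eventually_lt_const (by linarith)
    obtain ⟨x, hx⟩ := this.exists
    exact ⟨x, by simp only [hA, mem_setOf_eq]; linarith⟩
  -- A is bounded above
  have hlower : ∀ a ∈ A, ∀ b ≤ a, b ∈ A := by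
    intro a ha b hb
    simp only [hA, mem_setOf_eq] at *
    have := hmono hb
    linarith
  have hbdd : BddAbove A := by
    have : ∀ᶠ x in atTop, 1 - s < F x := htop.eventually_const_lt (by linarith)
    obtain ⟨x₀, hx₀⟩ := this.exists
    refine ⟨x₀, fun a ha => ?_⟩
    by_contra hcon
    push_neg at hcon
    have := hlower a ha x₀ hcon.le
    simp only [hA, mem_setOf_eq] at this
    linarith
  set q : ℝ := sSup A with hq
  have hAopen : IsOpen A := by
    have : A = (fun x => 1 - F x) ⁻¹' (Ioi s) := rfl
    rw [this]
    exact (continuous_const.sub hFc).isOpen_preimage _ isOpen_Ioi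
  have hAIio : A = Iio q := by
    ext x
    constructor
    · intro hx
      obtain ⟨ε, hε, hball⟩ := Metric.isOpen_iff.mp hAopen x hx
      have hmem : x + ε/2 ∈ A := hball (by
        simp only [Metric.mem_ball, Real.dist_eq]
        rw [abs_of_nonneg (by linarith)]
        linarith)
      have hle := le_csSup hbdd hmem
      show x < q
      rw [hq]
      linarith
    · intro hx
      obtain ⟨a, haA, hxa⟩ := exists_lt_of_lt_csSup hne hx
      exact hlower a haA x hxa.le
  -- F q = 1 - s
  have hFq : F q = 1 - s := by
    have hq_not : q ∉ A := by rw [hAIio]; exact fun h => lt_irrefl q h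
    have h1 : 1 - F q ≤ s := by
      simp only [hA, mem_setOf_eq, not_lt] at hq_not
      exact hq_not
    have h2 : s ≤ 1 - F q := by
      have hten : Tendsto (fun y => 1 - F y) (𝓝[<] q) (𝓝 (1 - F q)) :=
        ((continuous_const.sub hFc).tendsto q).mono_left nhdsWithin_le_nhds
      refine ge_of_tendsto hten ?_
      filter_upwards [self_mem_nhdsWithin] with y hy
      have hyA : y ∈ A := by rw [hAIio]; exact hy
      simp only [hA, mem_setOf_eq] at hyA
      exact hyA.le
    linarith
  -- measure of Iio q
  have hmeas : μ₀ (Iio q) = ENNReal.ofReal (F q) := by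
    have hU : (⋃ n : ℕ, Iic (q - 1/(n+1))) = Iio q := by
      ext x
      simp only [mem_iUnion, mem_Iic, mem_Iio]
      constructor
      · rintro ⟨n, hn⟩
        have : (0:ℝ) < 1/(n+1) := by positivity
        linarith
      · intro hx
        obtain ⟨n, hn⟩ := exists_nat_one_div_lt (show (0:ℝ) < q - x by linarith)
        exact ⟨n, by linarith⟩
    have hmon : Monotone (fun n : ℕ => Iic (q - 1/(n+1))) := by
      intro a b hab
      apply Iic_subset_Iic.mpr
      have hab' : (a:ℝ) ≤ b := Nat.cast_le.mpr hab
      have : (1:ℝ)/(b+1) ≤ 1/(a+1) := by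
        apply one_div_le_one_div_of_le (by positivity)
        linarith
      linarith
    have h1 : Tendsto (fun n : ℕ => μ₀ (Iic (q - 1/(n+1)))) atTop (𝓝 (μ₀ (Iio q))) := by
      rw [← hU]
      exact tendsto_measure_iUnion_atTop hmon
    have h2 : Tendsto (fun n : ℕ => (μ₀ (Iic (q - 1/(n+1)))).toReal) atTop (𝓝 (F q)) := by
      have harg : Tendsto (fun n : ℕ => q - 1/(n+1)) atTop (𝓝 q) := by
        have : Tendsto (fun n : ℕ => 1/((n:ℝ)+1)) atTop (𝓝 0) := tendsto_one_div_add_atTop_nhds_zero_nat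
        simpa using tendsto_const_nhds.sub this
      have h5 : Tendsto (fun n : ℕ => F (q - 1/(n+1))) atTop (𝓝 (F q)) := by
        exact (hFc.tendsto q).comp harg
      have h6 : (fun n : ℕ => F (q - 1/(n+1))) = fun n : ℕ => (μ₀ (Iic (q - 1/(n+1)))).toReal :=
        funext fun n => hF _
      rw [h6] at h5
      exact h5
    have h3 : Tendsto (fun n : ℕ => (μ₀ (Iic (q - 1/(n+1)))).toReal) atTop (𝓝 ((μ₀ (Iio q)).toReal)) :=
      (ENNReal.tendsto_toReal (measure_ne_top _ _)).comp h1
    have h4 : (μ₀ (Iio q)).toReal = F q := tendsto_nhds_unique h3 h2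
    rw [← h4, ENNReal.ofReal_toReal (measure_ne_top _ _)]
  rw [hAIio, hmeas, hFq]

lemma aux_integral_pow (μ₀ : Measure ℝ) [IsProbabilityMeasure μ₀] (F : ℝ → ℝ)
    (hF : ∀ t, F t = (μ₀ (Iic t)).toReal) (hFc : Continuous F)
    (k : ℕ) (hk : 1 ≤ k) :
    ∫ x, (1 - F x) ^ k ∂μ₀ = 1 / (k + 1) := by
  have hF0 : ∀ t, 0 ≤ F t := fun t => by rw [hF]; exact ENNReal.toReal_nonneg
  have hF1 : ∀ t, F t ≤ 1 := fun t => by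
    rw [hF]
    exact ENNReal.toReal_le_of_le_ofReal zero_le_one (by simpa using prob_le_one)
  have hG0 : ∀ t, 0 ≤ 1 - F t := fun t => by linarith [hF1 t]
  have hG1 : ∀ t, 1 - F t ≤ 1 := fun t => by linarith [hF0 t]
  have hmeas : Measurable fun x => (1 - F x) ^ k :=
    ((measurable_const.sub hFc.measurable).pow_const k)
  have hint : Integrable (fun x => (1 - F x) ^ k) μ₀ := by
    apply (integrable_const (1:ℝ)).mono' hmeas.aestronglyMeasurable
    refine ae_of_all _ fun x => ?_
    rw [Real.norm_eq_abs, abs_of_nonneg (pow_nonneg (hG0 x) k)]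
    exact pow_le_one₀ (hG0 x) (hG1 x)
  rw [hint.integral_eq_integral_meas_lt (ae_of_all _ fun x => pow_nonneg (hG0 x) k)]
  have hkpos : (0:ℝ) < k := by exact_mod_cast hk
  have hcongr : ∀ t ∈ Ioi (0:ℝ), (μ₀ {a | t < (1 - F a) ^ k}).toReal =
      (Ioo (0:ℝ) 1).indicator (fun t => 1 - t ^ ((k:ℝ)⁻¹)) t := by
    intro t ht
    simp only [mem_Ioi] at ht
    by_cases ht1 : t < 1
    · have hs0 : 0 < t ^ ((k:ℝ)⁻¹) := Real.rpow_pos_of_pos ht _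
      have hs1 : t ^ ((k:ℝ)⁻¹) < 1 := Real.rpow_lt_one ht.le ht1 (by positivity)
      have hset : {a | t < (1 - F a) ^ k} = {x | t ^ ((k:ℝ)⁻¹) < 1 - F x} := by
        ext a
        simp only [mem_setOf_eq]
        constructor
        · intro h
          have h2 : t ^ ((k:ℝ)⁻¹) < ((1 - F a) ^ k) ^ ((k:ℝ)⁻¹) :=
            Real.rpow_lt_rpow ht.le h (by positivity)
          rwa [← Real.rpow_natCast (1 - F a) k, ← Real.rpow_mul (hG0 a),
            mul_inv_cancel₀ (by exact_mod_cast hk.trans_lt' Nat.zero_lt_one |>.ne'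
              : (k:ℝ) ≠ 0), Real.rpow_one] at h2
        · intro h
          have h2 : (t ^ ((k:ℝ)⁻¹)) ^ (k:ℝ) < (1 - F a) ^ (k:ℝ) :=
            Real.rpow_lt_rpow (by positivity) h hkpos
          rwa [← Real.rpow_mul ht.le, inv_mul_cancel₀ (ne_of_gt hkpos), Real.rpow_one,
            Real.rpow_natCast] at h2
      rw [hset, aux_measure_gt μ₀ F hF hFc hs0 hs1, ENNReal.toReal_ofReal (by linarith)]
      rw [indicator_of_mem (by exact ⟨ht, ht1⟩ : t ∈ Ioo (0:ℝ) 1)]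
    · have hset : {a | t < (1 - F a) ^ k} = (∅ : Set ℝ) := by
        ext a
        simp only [mem_setOf_eq, mem_empty_iff_false, iff_false, not_lt]
        calc (1 - F a) ^ k ≤ 1 := pow_le_one₀ (hG0 a) (hG1 a)
          _ ≤ t := by linarith
      rw [hset, measure_empty, indicator_of_notMem (by simp [mem_Ioo]; intro _; linarith)]
      simp
  simp only [measureReal_def]
  rw [setIntegral_congr_fun measurableSet_Ioi hcongr]
  rw [setIntegral_indicator measurableSet_Ioo]
  have : Ioi (0:ℝ) ∩ Ioo 0 1 = Ioo 0 1 := by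
    ext x; simp only [mem_inter_iff, mem_Ioi, mem_Ioo]; tauto
  rw [this]
  rw [← integral_Ioc_eq_integral_Ioo, ← intervalIntegral.integral_of_le zero_le_one]
  have hrpow_int : IntervalIntegrable (fun t : ℝ => t ^ ((k:ℝ)⁻¹)) volume 0 1 :=
    intervalIntegral.intervalIntegrable_rpow (Or.inl (by positivity))
  rw [intervalIntegral.integral_sub intervalIntegrable_const hrpow_int]
  rw [integral_rpow (Or.inl (by
    have : (0:ℝ) < (k:ℝ)⁻¹ := by positivity
    linarith))]
  simp only [intervalIntegral.integral_const, smul_eq_mul, mul_one, sub_zero]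
  rw [Real.one_rpow, Real.zero_rpow (by positivity)]
  have hkne : (k:ℝ) ≠ 0 := ne_of_gt hkpos
  field_simp
  ring

lemma aux_cross {Ω : Type*} [MeasurableSpace Ω] (P : Measure Ω) [IsProbabilityMeasure P]
    (Y : Ω → ℝ) (Z : Ω → ℝ × ℝ) (hY : Measurable Y) (hZ : Measurable Z)
    (hindep : IndepFun Y Z P)
    (G : ℝ → ℝ) (hGm : Measurable G) (hG : ∀ t, G t = (P.map Y (Ioi t)).toReal)
    (ψ : ℝ × ℝ → ℝ) (hψm : Measurable ψ) (hψint : Integrable (fun ω => ψ (Z ω)) P) :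
    ∫ ω, ((if (Z ω).1 < Y ω then (1:ℝ) else 0) - G ((Z ω).1)) * ψ (Z ω) ∂P = 0 := by
  have : IsProbabilityMeasure (P.map Y) := Measure.isProbabilityMeasure_map hY.aemeasurable
  have : IsProbabilityMeasure (P.map Z) := Measure.isProbabilityMeasure_map hZ.aemeasurable
  set μY := P.map Y with hμY
  set μZ := P.map Z with hμZ
  set φ : ℝ × (ℝ × ℝ) → ℝ :=
    fun p => ((if p.2.1 < p.1 then (1:ℝ) else 0) - G p.2.1) * ψ p.2 with hφ
  have hφm : Measurable φ := by
    apply Measurable.mul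
    · apply Measurable.sub
      · exact Measurable.ite (measurableSet_lt (measurable_snd.fst) measurable_fst)
          measurable_const measurable_const
      · exact hGm.comp (measurable_snd.fst)
    · exact hψm.comp measurable_snd
  have hT : Measurable fun ω => (Y ω, Z ω) := hY.prodMk hZ
  have hmap : P.map (fun ω => (Y ω, Z ω)) = μY.prod μZ :=
    (indepFun_iff_map_prod_eq_prod_map_map hY.aemeasurable hZ.aemeasurable).mp hindep
  have hψμZ : Integrable ψ μZ := by
    rw [hμZ, integrable_map_measure hψm.aestronglyMeasurable hZ.aemeasurable]
    exact hψint
  have hφint : Integrable φ (μY.prod μZ) := by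
    apply Integrable.mono' (g := fun p => 2 * |ψ p.2|)
    · have hsnd : (P.map Z) = (μY.prod μZ).map Prod.snd := by
        rw [Measure.map_snd_prod, measure_univ, one_smul, hμZ]
      have : Integrable (fun p : ℝ × (ℝ × ℝ) => ψ p.2) (μY.prod μZ) := by
        have := hψμZ
        rw [hμZ, hsnd, integrable_map_measure hψm.aestronglyMeasurable
          measurable_snd.aemeasurable] at this
        exact this
      exact (this.abs).const_mul 2
    · exact hφm.aestronglyMeasurable
    · refine ae_of_all _ fun p => ?_
      rw [hφ]
      simp only [Real.norm_eq_abs, abs_mul]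
      have h1 : |(if p.2.1 < p.1 then (1:ℝ) else 0) - G p.2.1| ≤ 2 := by
        have hG01 : 0 ≤ G p.2.1 ∧ G p.2.1 ≤ 1 := by
          constructor
          · rw [hG]; exact ENNReal.toReal_nonneg
          · rw [hG]; exact ENNReal.toReal_le_of_le_ofReal zero_le_one (by simpa using prob_le_one)
        split_ifs <;> [skip; skip] <;>
          · rw [abs_le]; constructor <;> [linarith [hG01.1, hG01.2]; linarith [hG01.1, hG01.2]]
      calc |(if p.2.1 < p.1 then (1:ℝ) else 0) - G p.2.1| * |ψ p.2| ≤ 2 * |ψ p.2| := by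
            apply mul_le_mul_of_nonneg_right h1 (abs_nonneg _)
        _ = 2 * |ψ p.2| := rfl
  have step1 : ∫ ω, ((if (Z ω).1 < Y ω then (1:ℝ) else 0) - G ((Z ω).1)) * ψ (Z ω) ∂P
      = ∫ p, φ p ∂(μY.prod μZ) := by
    rw [← hmap, integral_map hT.aemeasurable hφm.aestronglyMeasurable]
  rw [step1, integral_prod_symm φ hφint]
  have inner : ∀ b : ℝ × ℝ, (∫ a, φ (a, b) ∂μY) = 0 := by
    intro b
    rw [hφ]
    simp only
    rw [integral_mul_const]
    have hind : (fun a : ℝ => (if b.1 < a then (1:ℝ) else 0)) = fun a => (Ioi b.1).indicator 1 a := by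
      funext a
      simp [indicator, mem_Ioi]
    have h2 : ∫ a, (if b.1 < a then (1:ℝ) else 0) ∂μY = (μY (Ioi b.1)).toReal := by
      rw [hind, integral_indicator_one measurableSet_Ioi, measureReal_def]
    have hintind : Integrable (fun a : ℝ => (if b.1 < a then (1:ℝ) else 0)) μY := by
      rw [hind]
      exact (integrable_const (1:ℝ)).indicator measurableSet_Ioi
    rw [integral_sub hintind (integrable_const _), h2, integral_const, probReal_univ]
    simp [hG b.1, hμY]
  simp only [inner, integral_zero]

lemma part2 {Ω : Type*} [MeasurableSpace Ω]
    (P : Measure Ω) [IsProbabilityMeasure P] (ν : ℕ) (hν : 2 ≤ ν)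
    (X : ℕ → Ω → ℝ) (hm : ∀ i, Measurable (X i))
    (hpos : ∀ i ω, 0 ≤ X i ω)
    (hid : ∀ i, IdentDistrib (X i) (X 0) P P)
    (hindep : iIndepFun X P)
    (hint2 : Integrable (fun ω => (X 0 ω) ^ 2) P)
    (μ : ℝ) (hμ : μ = ∫ ω, X 0 ω ∂P) (hμpos : 0 < μ)
    (F : ℝ → ℝ) (hF : ∀ t, F t = (P.map (X 0) (Set.Iic t)).toReal)
    (hFcont : Continuous F)
    (R : ℝ) (hR : R = (-(ν : ℝ) / μ) * ((∫ ω, X 0 ω * (1 - F (X 0 ω)) ^ (ν - 1) ∂P) -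
      μ * (∫ ω, (1 - F (X 0 ω)) ^ (ν - 1) ∂P))) :
      variance (fun ω => (1 - (ν : ℝ) * (1 - F (X 0 ω)) ^ (ν - 1) - R) * X 0 ω) P =
        ∫ ω, ((1 - (ν : ℝ) * (1 - F (X 0 ω)) ^ (ν - 1) - R) * X 0 ω) ^ 2 ∂P := by
  have hμ₀ : IsProbabilityMeasure (P.map (X 0)) := Measure.isProbabilityMeasure_map (hm 0).aemeasurable
  set k := ν - 1 with hkdef
  have hk1 : 1 ≤ k := by omega
  have hνk : (ν : ℝ) = (k : ℝ) + 1 := by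
    rw [hkdef]; push_cast [Nat.cast_sub (by omega : 1 ≤ ν)]; ring
  have hF0 : ∀ t, 0 ≤ F t := fun t => by rw [hF]; exact ENNReal.toReal_nonneg
  have hF1 : ∀ t, F t ≤ 1 := fun t => by
    rw [hF]; exact ENNReal.toReal_le_of_le_ofReal zero_le_one (by simpa using prob_le_one)
  have hGk01 : ∀ t, 0 ≤ (1 - F t) ^ k ∧ (1 - F t) ^ k ≤ 1 := fun t =>
    ⟨pow_nonneg (by linarith [hF1 t]) k, pow_le_one₀ (by linarith [hF1 t]) (by linarith [hF0 t])⟩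
  set g : ℝ → ℝ := fun x => (1 - (ν : ℝ) * (1 - F x) ^ k - R) * x with hg
  have hgm : Measurable g := by
    apply Measurable.mul _ measurable_id
    exact (measurable_const.sub (measurable_const.mul
      ((measurable_const.sub hFcont.measurable).pow_const k))).sub measurable_const
  set C : ℝ := 1 + ν + |R| with hC
  have hgb : ∀ x, |g x| ≤ C * |x| := by
    intro x
    rw [hg]
    simp only
    rw [abs_mul]
    apply mul_le_mul_of_nonneg_right _ (abs_nonneg x)
    have h1 := (hGk01 x).1
    have h2 := (hGk01 x).2
    have hν0 : (0:ℝ) ≤ ν := by positivity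
    rw [abs_le]
    constructor
    · have : (ν:ℝ) * (1 - F x) ^ k ≤ ν := by nlinarith
      simp only [hC]
      cases abs_cases R with
      | inl h => nlinarith
      | inr h => nlinarith
    · have : (0:ℝ) ≤ (ν:ℝ) * (1 - F x) ^ k := by positivity
      simp only [hC]
      cases abs_cases R with
      | inl h => nlinarith
      | inr h => nlinarith
  have hX2 : MemLp (X 0) 2 P := (memLp_two_iff_integrable_sq (hm 0).aestronglyMeasurable).mpr hint2
  have hXint : Integrable (X 0) P := hX2.integrable one_le_two
  have hY2 : MemLp (fun ω => g (X 0 ω)) 2 P := by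
    apply MemLp.of_le_mul (hX2) ((hgm.comp (hm 0)).aestronglyMeasurable)
    exact ae_of_all _ fun ω => by simpa [Real.norm_eq_abs] using hgb (X 0 ω)
  have hEY : ∫ ω, g (X 0 ω) ∂P = 0 := by
    have hGXk : ∫ ω, (1 - F (X 0 ω)) ^ k ∂P = 1 / ν := by
      rw [← integral_map (f := fun x : ℝ => (1 - F x) ^ k) (hm 0).aemeasurable
        (((measurable_const.sub hFcont.measurable).pow_const k).aestronglyMeasurable)]
      rw [aux_integral_pow (P.map (X 0)) F hF hFcont k hk1, hνk]
    have hintGX : Integrable (fun ω => (1 - F (X 0 ω)) ^ k * X 0 ω) P := by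
      apply Integrable.mono' hXint.abs
        (((((measurable_const.sub hFcont.measurable).pow_const k).comp (hm 0))).mul
          (hm 0)).aestronglyMeasurable
      refine ae_of_all _ fun ω => ?_
      show ‖(1 - F (X 0 ω)) ^ k * X 0 ω‖ ≤ |X 0 ω|
      rw [Real.norm_eq_abs, abs_mul]
      apply mul_le_of_le_one_left (abs_nonneg _)
      rw [abs_of_nonneg (hGk01 (X 0 ω)).1]
      exact (hGk01 (X 0 ω)).2
    have hexp : (fun ω => g (X 0 ω)) =
        fun ω => X 0 ω - (ν : ℝ) * ((1 - F (X 0 ω)) ^ k * X 0 ω) - R * X 0 ω := by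
      funext ω
      rw [hg]
      ring
    rw [hexp]
    have hi1 : Integrable (fun ω => (ν:ℝ) * ((1 - F (X 0 ω)) ^ k * X 0 ω)) P :=
      hintGX.const_mul _
    have hi2 : Integrable (fun ω => X 0 ω - (ν:ℝ) * ((1 - F (X 0 ω)) ^ k * X 0 ω)) P :=
      hXint.sub hi1
    have hi3 : Integrable (fun ω => R * X 0 ω) P := hXint.const_mul _
    rw [integral_sub hi2 hi3, integral_sub hXint hi1, integral_const_mul, integral_const_mul]
    have hI1 : ∫ ω, X 0 ω * (1 - F (X 0 ω)) ^ k ∂P = ∫ ω, (1 - F (X 0 ω)) ^ k * X 0 ω ∂P := by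
      congr 1
      funext ω
      ring
    rw [hI1, hGXk] at hR
    have hμne : μ ≠ 0 := ne_of_gt hμpos
    rw [← hμ, hR]
    field_simp
    ring
  have hgoal : (fun ω => (1 - (ν:ℝ) * (1 - F (X 0 ω)) ^ k - R) * X 0 ω) =
      fun ω => g (X 0 ω) := rfl
  rw [hgoal, variance_eq_sub hY2, hEY]
  simp only [Pi.pow_apply]
  ring

set_option maxHeartbeats 2000000 in
/-- For an i.i.d. sequence of non-negative random variables with
continuous distribution function `F`, finite second moment and positive mean `μ`, with
`R_ν = (−ν/μ) Cov(X₁, F̄(X₁)^{ν−1})`, empirical survival function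
`F̄_n(x) = (1/n) Σ_j 1{X_j > x}` and
`Ĉ(Xᵢ, R_ν) = (1 − ν F̄_n(Xᵢ)^{ν−1}) Xᵢ − R_ν Xᵢ`, one has
`(1/n) Σᵢ Ĉ²(Xᵢ, R_ν) → σ₁²` in probability, where
`σ₁² = Var((1 − ν F̄(X₁)^{ν−1} − R_ν) X₁) = E[((1 − ν F̄(X₁)^{ν−1} − R_ν) X₁)²]`. -/
theorem empirical_estimating_function_lln {Ω : Type*} [MeasurableSpace Ω]
    (P : Measure Ω) [IsProbabilityMeasure P] (ν : ℕ) (hν : 2 ≤ ν)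
    (X : ℕ → Ω → ℝ) (hm : ∀ i, Measurable (X i))
    (hpos : ∀ i ω, 0 ≤ X i ω)
    (hid : ∀ i, IdentDistrib (X i) (X 0) P P)
    (hindep : iIndepFun X P)
    (hint2 : Integrable (fun ω => (X 0 ω) ^ 2) P)
    (μ : ℝ) (hμ : μ = ∫ ω, X 0 ω ∂P) (hμpos : 0 < μ)
    (F : ℝ → ℝ) (hF : ∀ t, F t = (P.map (X 0) (Set.Iic t)).toReal)
    (hFcont : Continuous F)
    (R : ℝ) (hR : R = (-(ν : ℝ) / μ) * ((∫ ω, X 0 ω * (1 - F (X 0 ω)) ^ (ν - 1) ∂P) -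
      μ * (∫ ω, (1 - F (X 0 ω)) ^ (ν - 1) ∂P))) :
    TendstoInMeasure P
        (fun (n : ℕ) ω => (1 / (n : ℝ)) *
          ∑ i ∈ Finset.range n,
            ((1 - (ν : ℝ) * ((1 / (n : ℝ)) *
                ∑ j ∈ Finset.range n,
                  (if X i ω < X j ω then (1 : ℝ) else 0)) ^ (ν - 1)) * X i ω -
              R * X i ω) ^ 2)
        atTop
        (fun _ => variance (fun ω => (1 - (ν : ℝ) * (1 - F (X 0 ω)) ^ (ν - 1) - R) * X 0 ω) P) ∧
      variance (fun ω => (1 - (ν : ℝ) * (1 - F (X 0 ω)) ^ (ν - 1) - R) * X 0 ω) P =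
        ∫ ω, ((1 - (ν : ℝ) * (1 - F (X 0 ω)) ^ (ν - 1) - R) * X 0 ω) ^ 2 ∂P := by
  have h2 := part2 P ν hν X hm hpos hid hindep hint2 μ hμ hμpos F hF hFcont R hR
  refine ⟨?_, h2⟩
  -- notation
  set k := ν - 1 with hkdef
  have hk1 : 1 ≤ k := by omega
  have hF0 : ∀ t, 0 ≤ F t := fun t => by rw [hF]; exact ENNReal.toReal_nonneg
  have hF1 : ∀ t, F t ≤ 1 := fun t => by
    rw [hF]; exact ENNReal.toReal_le_of_le_ofReal zero_le_one (by simpa using prob_le_one)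
  set g : ℝ → ℝ := fun x => (1 - (ν : ℝ) * (1 - F x) ^ k - R) * x with hgdef
  have hgm : Measurable g := by
    apply Measurable.mul _ measurable_id
    exact (measurable_const.sub (measurable_const.mul
      ((measurable_const.sub hFcont.measurable).pow_const k))).sub measurable_const
  -- empirical survival, deviations
  set Fn : ℕ → ℕ → Ω → ℝ := fun n i ω => (1 / (n : ℝ)) *
      ∑ j ∈ Finset.range n, (if X i ω < X j ω then (1:ℝ) else 0) with hFndef
  set D : ℕ → ℕ → Ω → ℝ := fun n i ω => Fn n i ω - (1 - F (X i ω)) with hDdef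
  set W : ℕ → ℕ → Ω → ℝ := fun i j ω =>
      (if X i ω < X j ω then (1:ℝ) else 0) - (1 - F (X i ω)) with hWdef
  set K : ℝ := 2 * (ν : ℝ) * k * (1 + ν + |R|) with hKdef
  have hK0 : 0 ≤ K := by positivity
  set c : ℝ := ∫ ω, (X 0 ω) ^ 2 ∂P with hcdef
  set T : ℕ → Ω → ℝ := fun n ω => (1 / (n : ℝ)) * ∑ i ∈ Finset.range n, (X i ω) ^ 2 with hTdef
  set B : ℕ → Ω → ℝ := fun n ω => (1 / (n : ℝ)) * ∑ i ∈ Finset.range n, (g (X i ω)) ^ 2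
    with hBdef
  set S : ℕ → Ω → ℝ := fun n ω => K ^ 2 *
      ((1 / (n : ℝ)) * ∑ i ∈ Finset.range n, (D n i ω) ^ 2 * (X i ω) ^ 2) with hSdef
  -- basic facts
  have sqm : Measurable fun x : ℝ => x ^ 2 := measurable_id.pow_const 2
  have hXi2int : ∀ i, Integrable (fun ω => (X i ω) ^ 2) P := fun i =>
    ((hid i).comp sqm).integrable_iff.mpr hint2
  have hXi2val : ∀ i, ∫ ω, (X i ω) ^ 2 ∂P = c := fun i => ((hid i).comp sqm).integral_eq
  have hFn01 : ∀ n i ω, 0 ≤ Fn n i ω ∧ Fn n i ω ≤ 1 := by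
    intro n i ω
    rcases Nat.eq_zero_or_pos n with rfl | hn
    · simp [hFndef]
    constructor
    · apply mul_nonneg (by positivity)
      apply Finset.sum_nonneg
      intro j _
      split_ifs <;> norm_num
    · rw [hFndef]
      have hsum : ∑ j ∈ Finset.range n, (if X i ω < X j ω then (1:ℝ) else 0) ≤ n := by
        calc ∑ j ∈ Finset.range n, (if X i ω < X j ω then (1:ℝ) else 0)
            ≤ ∑ j ∈ Finset.range n, 1 := by
              apply Finset.sum_le_sum
              intro j _
              split_ifs <;> norm_num
          _ = n := by simp
      have hnpos : (0:ℝ) < n := by exact_mod_cast hn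
      calc (1 / (n:ℝ)) * ∑ j ∈ Finset.range n, (if X i ω < X j ω then (1:ℝ) else 0)
          ≤ (1 / (n:ℝ)) * n := by
            apply mul_le_mul_of_nonneg_left hsum (by positivity)
        _ = 1 := by field_simp
  have hGb : ∀ t, 0 ≤ 1 - F t ∧ 1 - F t ≤ 1 := fun t => ⟨by linarith [hF1 t], by linarith [hF0 t]⟩
  have hWbd : ∀ i j ω, |W i j ω| ≤ 1 := by
    intro i j ω
    rw [hWdef]
    simp only
    have := hGb (X i ω)
    rw [abs_le]
    split_ifs <;> constructor <;> linarith [this.1, this.2]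
  have hWm : ∀ i j, Measurable (W i j) := by
    intro i j
    rw [hWdef]
    apply Measurable.sub
    · exact Measurable.ite (measurableSet_lt (hm i) (hm j)) measurable_const measurable_const
    · exact (measurable_const.sub (hFcont.measurable.comp (hm i)))
  have hGIoi : ∀ t, 1 - F t = ((P.map (X 0)) (Ioi t)).toReal := by
    intro t
    have h1 : (P.map (X 0)) (Ioi t) = 1 - (P.map (X 0)) (Iic t) := by
      have : IsProbabilityMeasure (P.map (X 0)) := Measure.isProbabilityMeasure_map (hm 0).aemeasurable
      rw [← Set.compl_Iic, measure_compl measurableSet_Iic (measure_ne_top _ _), measure_univ]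
    rw [h1, ENNReal.toReal_sub_of_le (by simpa using prob_le_one) (by simp), hF]
    simp
  have hGm : Measurable fun t : ℝ => 1 - F t := measurable_const.sub hFcont.measurable
  -- integrability of cross terms
  have hterm_int : ∀ i j l, Integrable (fun ω => W i j ω * (W i l ω * (X i ω) ^ 2)) P := by
    intro i j l
    apply Integrable.mono' (hXi2int i)
      (((hWm i j).mul ((hWm i l).mul ((hm i).pow_const 2))).aestronglyMeasurable)
    refine ae_of_all _ fun ω => ?_
    show ‖W i j ω * (W i l ω * (X i ω) ^ 2)‖ ≤ (X i ω) ^ 2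
    rw [Real.norm_eq_abs, abs_mul, abs_mul]
    have h1 := hWbd i j ω
    have h2 := hWbd i l ω
    have h3 : |(X i ω) ^ 2| = (X i ω) ^ 2 := abs_of_nonneg (sq_nonneg _)
    rw [h3]
    have hx2 : (0:ℝ) ≤ X i ω ^ 2 := sq_nonneg _
    calc |W i j ω| * (|W i l ω| * X i ω ^ 2) ≤ 1 * (1 * X i ω ^ 2) :=
          mul_le_mul h1 (mul_le_mul h2 le_rfl hx2 zero_le_one)
            (by positivity) zero_le_one
      _ = X i ω ^ 2 := by ring
  -- cross terms vanish
  have hcross : ∀ i j l : ℕ, j ≠ l →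
      ∫ ω, W i j ω * (W i l ω * (X i ω) ^ 2) ∂P = 0 := by
    intro i j l hjl
    have gen : ∀ j' l' : ℕ, j' ≠ i → j' ≠ l' →
        ∫ ω, W i j' ω * (W i l' ω * (X i ω) ^ 2) ∂P = 0 := by
      intro j' l' hji hjl'
      have hZm : Measurable fun ω => (X i ω, X l' ω) := (hm i).prodMk (hm l')
      have hind : IndepFun (X j') (fun ω => (X i ω, X l' ω)) P := by
        rcases eq_or_ne l' i with rfl | hli
        · have h0 : IndepFun (X j') (X l') P := hindep.indepFun hji
          exact h0.comp measurable_id (measurable_id.prodMk measurable_id)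
        · exact (hindep.indepFun_prodMk hm i l' j' (Ne.symm hji) (Ne.symm hjl')).symm
      set ψ : ℝ × ℝ → ℝ :=
        fun p => ((if p.1 < p.2 then (1:ℝ) else 0) - (1 - F p.1)) * p.1 ^ 2 with hψdef
      have hψm : Measurable ψ := by
        apply Measurable.mul
        · exact (Measurable.ite (measurableSet_lt measurable_fst measurable_snd)
            measurable_const measurable_const).sub (hGm.comp measurable_fst)
        · exact measurable_fst.pow_const 2
      have hψint : Integrable (fun ω => ψ (X i ω, X l' ω)) P := by
        apply Integrable.mono' ((hXi2int i).const_mul 2)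
          ((hψm.comp hZm).aestronglyMeasurable)
        refine ae_of_all _ fun ω => ?_
        simp only [Function.comp_apply, hψdef, Real.norm_eq_abs, abs_mul]
        have hb : |(if X i ω < X l' ω then (1:ℝ) else 0) - (1 - F (X i ω))| ≤ 2 := by
          have := hGb (X i ω)
          rw [abs_le]
          split_ifs <;> constructor <;> linarith [this.1, this.2]
        have h3 : |(X i ω) ^ 2| = (X i ω) ^ 2 := abs_of_nonneg (sq_nonneg _)
        rw [h3]
        nlinarith [sq_nonneg (X i ω), abs_nonneg ((if X i ω < X l' ω then (1:ℝ) else 0) - (1 - F (X i ω)))]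
      have hGj' : ∀ t, 1 - F t = ((P.map (X j')) (Ioi t)).toReal := by
        intro t
        rw [(hid j').map_eq]
        exact hGIoi t
      have h := aux_cross P (X j') (fun ω => (X i ω, X l' ω)) (hm j') hZm hind
        (fun t => 1 - F t) hGm hGj' ψ hψm hψint
      simp only [hWdef]
      simpa [hψdef] using h
    rcases eq_or_ne j i with rfl | hji
    · have hswap : (fun ω => W j j ω * (W j l ω * (X j ω) ^ 2)) =
          fun ω => W j l ω * (W j j ω * (X j ω) ^ 2) := funext fun ω => by ring
      rw [hswap]
      exact gen l j (Ne.symm hjl) (Ne.symm hjl)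
    · exact gen j l hji hjl
  -- key second-moment bound
  have hkey : ∀ n, ∀ i ∈ Finset.range n,
      ∫ ω, (D n i ω) ^ 2 * (X i ω) ^ 2 ∂P ≤ c / n := by
    intro n i hi
    have hn1 : 0 < n := lt_of_le_of_lt (Nat.zero_le i) (Finset.mem_range.mp hi)
    have hnR : (0:ℝ) < n := by exact_mod_cast hn1
    have hDeq : ∀ ω, D n i ω = (1/(n:ℝ)) * ∑ j ∈ Finset.range n, W i j ω := by
      intro ω
      rw [hDdef, hWdef, hFndef]
      simp only
      rw [Finset.sum_sub_distrib, Finset.sum_const, Finset.card_range, nsmul_eq_mul]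
      field_simp
    have hexp : ∀ ω, (D n i ω) ^ 2 * (X i ω) ^ 2 = (1/(n:ℝ)) ^ 2 *
        ∑ j ∈ Finset.range n, ∑ l ∈ Finset.range n, W i j ω * (W i l ω * (X i ω) ^ 2) := by
      intro ω
      have e1 : (D n i ω) ^ 2 * (X i ω) ^ 2 = (1/(n:ℝ)) ^ 2 *
          ((∑ j ∈ Finset.range n, W i j ω) * (∑ l ∈ Finset.range n, W i l ω) * (X i ω) ^ 2) := by
        rw [hDeq ω]; ring
      rw [e1]
      congr 1
      rw [Finset.sum_mul_sum, Finset.sum_mul]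
      apply Finset.sum_congr rfl
      intro j _
      rw [Finset.sum_mul]
      apply Finset.sum_congr rfl
      intro l _
      ring
    have hIeq : ∫ ω, (D n i ω) ^ 2 * (X i ω) ^ 2 ∂P = (1/(n:ℝ)) ^ 2 *
        ∑ j ∈ Finset.range n, ∑ l ∈ Finset.range n,
          ∫ ω, W i j ω * (W i l ω * (X i ω) ^ 2) ∂P := by
      simp_rw [hexp]
      rw [integral_const_mul]
      congr 1
      rw [integral_finset_sum _ (fun j _ => integrable_finset_sum _ (fun l _ => hterm_int i j l))]
      apply Finset.sum_congr rfl
      intro j _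
      rw [integral_finset_sum _ (fun l _ => hterm_int i j l)]
    have hdiagb : ∀ j, ∫ ω, W i j ω * (W i j ω * (X i ω) ^ 2) ∂P ≤ c := by
      intro j
      calc ∫ ω, W i j ω * (W i j ω * (X i ω) ^ 2) ∂P ≤ ∫ ω, (X i ω) ^ 2 ∂P := by
            apply integral_mono (hterm_int i j j) (hXi2int i)
            intro ω
            show W i j ω * (W i j ω * X i ω ^ 2) ≤ X i ω ^ 2
            have h1 : W i j ω * W i j ω ≤ 1 := by
              have := abs_le.mp (hWbd i j ω)
              nlinarith
            nlinarith [sq_nonneg (X i ω)]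
        _ = c := hXi2val i
    have hrow : ∀ j ∈ Finset.range n,
        (∑ l ∈ Finset.range n, ∫ ω, W i j ω * (W i l ω * (X i ω) ^ 2) ∂P) =
        ∫ ω, W i j ω * (W i j ω * (X i ω) ^ 2) ∂P := by
      intro j hj
      apply Finset.sum_eq_single_of_mem j hj
      intro l _ hlj
      exact hcross i j l (Ne.symm hlj)
    rw [hIeq, Finset.sum_congr rfl hrow]
    have hsum : ∑ j ∈ Finset.range n, ∫ ω, W i j ω * (W i j ω * (X i ω) ^ 2) ∂P ≤ n * c := by
      calc ∑ j ∈ Finset.range n, ∫ ω, W i j ω * (W i j ω * (X i ω) ^ 2) ∂P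
          ≤ ∑ j ∈ Finset.range n, c := Finset.sum_le_sum fun j _ => hdiagb j
        _ = n * c := by rw [Finset.sum_const, Finset.card_range, nsmul_eq_mul]
    calc (1/(n:ℝ)) ^ 2 * ∑ j ∈ Finset.range n, ∫ ω, W i j ω * (W i j ω * (X i ω) ^ 2) ∂P
        ≤ (1/(n:ℝ)) ^ 2 * (n * c) := by
          apply mul_le_mul_of_nonneg_left hsum (by positivity)
      _ = c / n := by field_simp
  -- basic positivity
  have hc0 : 0 ≤ c := by
    rw [hcdef]
    exact integral_nonneg fun ω => sq_nonneg _
  have hDm : ∀ n i, Measurable (D n i) := by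
    intro n i
    rw [hDdef, hFndef]
    apply Measurable.sub
    · apply Measurable.const_mul
      apply Finset.measurable_sum
      intro j _
      exact Measurable.ite (measurableSet_lt (hm i) (hm j)) measurable_const measurable_const
    · exact measurable_const.sub (hFcont.measurable.comp (hm i))
  have hDbd : ∀ n i ω, |D n i ω| ≤ 1 := by
    intro n i ω
    have h1 := hFn01 n i ω
    have h2 := hGb (X i ω)
    rw [hDdef]
    simp only
    rw [abs_le]
    constructor <;> linarith [h1.1, h1.2, h2.1, h2.2]
  have hDX2int : ∀ n i, Integrable (fun ω => (D n i ω) ^ 2 * (X i ω) ^ 2) P := by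
    intro n i
    apply Integrable.mono' (hXi2int i)
      (((hDm n i).pow_const 2).mul ((hm i).pow_const 2)).aestronglyMeasurable
    refine ae_of_all _ fun ω => ?_
    show ‖(D n i ω) ^ 2 * (X i ω) ^ 2‖ ≤ (X i ω) ^ 2
    rw [Real.norm_eq_abs, abs_mul, abs_of_nonneg (sq_nonneg (D n i ω)),
      abs_of_nonneg (sq_nonneg (X i ω))]
    have h1 : (D n i ω) ^ 2 ≤ 1 := by
      have := hDbd n i ω
      nlinarith [abs_nonneg (D n i ω), sq_abs (D n i ω)]
    calc (D n i ω) ^ 2 * (X i ω) ^ 2 ≤ 1 * (X i ω) ^ 2 :=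
          mul_le_mul_of_nonneg_right h1 (sq_nonneg _)
      _ = (X i ω) ^ 2 := one_mul _
  have hSint : ∀ n, Integrable (S n) P := by
    intro n
    rw [hSdef]
    exact ((integrable_finset_sum _ fun i _ => hDX2int n i).const_mul _).const_mul _
  have hSnn : ∀ n ω, 0 ≤ S n ω := by
    intro n ω
    rw [hSdef]
    simp only
    apply mul_nonneg (sq_nonneg K)
    apply mul_nonneg (by positivity)
    exact Finset.sum_nonneg fun i _ => mul_nonneg (sq_nonneg _) (sq_nonneg _)
  have hTnn : ∀ n ω, 0 ≤ T n ω := by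
    intro n ω
    rw [hTdef]
    apply mul_nonneg (by positivity)
    exact Finset.sum_nonneg fun i _ => sq_nonneg _
  -- expected value of S n tends to zero
  have hSmean : ∀ n, ∫ ω, S n ω ∂P ≤ K ^ 2 * c / n := by
    intro n
    rcases Nat.eq_zero_or_pos n with rfl | hn
    · simp [hSdef]
    have hnR : (0:ℝ) < n := by exact_mod_cast hn
    have hIS : ∫ ω, S n ω ∂P = K ^ 2 * ((1/(n:ℝ)) *
        ∑ i ∈ Finset.range n, ∫ ω, (D n i ω) ^ 2 * (X i ω) ^ 2 ∂P) := by
      rw [hSdef]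
      rw [integral_const_mul, integral_const_mul,
        integral_finset_sum _ fun i _ => hDX2int n i]
    rw [hIS]
    have hsum : ∑ i ∈ Finset.range n, ∫ ω, (D n i ω) ^ 2 * (X i ω) ^ 2 ∂P ≤ n * (c / n) := by
      calc ∑ i ∈ Finset.range n, ∫ ω, (D n i ω) ^ 2 * (X i ω) ^ 2 ∂P
          ≤ ∑ i ∈ Finset.range n, (c / n) := Finset.sum_le_sum fun i hi => hkey n i hi
        _ = n * (c / n) := by rw [Finset.sum_const, Finset.card_range, nsmul_eq_mul]
    calc K ^ 2 * ((1/(n:ℝ)) * ∑ i ∈ Finset.range n, ∫ ω, (D n i ω) ^ 2 * (X i ω) ^ 2 ∂P)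
        ≤ K ^ 2 * ((1/(n:ℝ)) * (n * (c / n))) := by
          apply mul_le_mul_of_nonneg_left _ (sq_nonneg K)
          apply mul_le_mul_of_nonneg_left hsum (by positivity)
      _ = K ^ 2 * c / n := by field_simp
  have hSmean0 : Tendsto (fun n => ∫ ω, S n ω ∂P) atTop (𝓝 0) :=
    squeeze_zero (fun n => integral_nonneg (hSnn n)) hSmean
      (tendsto_const_div_atTop_nhds_zero_nat _)
  have hStm : TendstoInMeasure P S atTop (fun _ => (0:ℝ)) :=
    aux_tendstoInMeasure_zero P S hSnn hSint hSmean0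
  -- SLLN for T
  have hTae : ∀ᵐ ω ∂P, Tendsto (fun n : ℕ => (∑ i ∈ Finset.range n, (X i ω) ^ 2) / n)
      atTop (𝓝 c) := by
    have := strong_law_ae_real (fun i ω => (X i ω) ^ 2) hint2
      (fun i j hij => (hindep.indepFun hij).comp sqm sqm)
      (fun i => (hid i).comp sqm)
    exact this
  have hTtm : TendstoInMeasure P T atTop (fun _ => c) := by
    apply tendstoInMeasure_of_tendsto_ae
    · intro n
      rw [hTdef]
      exact (Measurable.const_mul (Finset.measurable_sum _ fun i _ =>
        (hm i).pow_const 2) _).aestronglyMeasurable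
    · filter_upwards [hTae] with ω hω
      have heq : ∀ n : ℕ, T n ω = (∑ i ∈ Finset.range n, (X i ω) ^ 2) / n := by
        intro n
        rw [hTdef]
        ring
      simp only [heq]
      exact hω
  -- SLLN for B
  have hgb : ∀ x, |g x| ≤ (1 + (ν:ℝ) + |R|) * |x| := by
    intro x
    rw [hgdef]
    simp only
    rw [abs_mul]
    apply mul_le_mul_of_nonneg_right _ (abs_nonneg x)
    have h1 : 0 ≤ (1 - F x) ^ k := pow_nonneg (hGb x).1 k
    have h2 : (1 - F x) ^ k ≤ 1 := pow_le_one₀ (hGb x).1 (hGb x).2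
    have hν0 : (0:ℝ) ≤ ν := by positivity
    rw [abs_le]
    constructor
    · cases abs_cases R with
      | inl h => nlinarith
      | inr h => nlinarith
    · cases abs_cases R with
      | inl h => nlinarith
      | inr h => nlinarith
  have hg2int : Integrable (fun ω => (g (X 0 ω)) ^ 2) P := by
    apply Integrable.mono' (hint2.const_mul ((1 + (ν:ℝ) + |R|) ^ 2))
      (((hgm.pow_const 2).comp (hm 0)).aestronglyMeasurable)
    refine ae_of_all _ fun ω => ?_
    simp only [Function.comp_apply]
    rw [Real.norm_eq_abs, abs_of_nonneg (sq_nonneg _)]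
    have := hgb (X 0 ω)
    calc (g (X 0 ω)) ^ 2 = |g (X 0 ω)| ^ 2 := (sq_abs _).symm
      _ ≤ ((1 + (ν:ℝ) + |R|) * |X 0 ω|) ^ 2 := by
          apply pow_le_pow_left₀ (abs_nonneg _) this
      _ = (1 + (ν:ℝ) + |R|) ^ 2 * X 0 ω ^ 2 := by
          rw [mul_pow, sq_abs]
  have hσ : variance (fun ω => (1 - (ν:ℝ) * (1 - F (X 0 ω)) ^ k - R) * X 0 ω) P =
      ∫ ω, (g (X 0 ω)) ^ 2 ∂P := h2
  have hBae : ∀ᵐ ω ∂P, Tendsto (fun n : ℕ => (∑ i ∈ Finset.range n, (g (X i ω)) ^ 2) / n)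
      atTop (𝓝 (∫ ω, (g (X 0 ω)) ^ 2 ∂P)) := by
    have := strong_law_ae_real (fun i ω => (g (X i ω)) ^ 2) hg2int
      (fun i j hij => (hindep.indepFun hij).comp (hgm.pow_const 2) (hgm.pow_const 2))
      (fun i => (hid i).comp (hgm.pow_const 2))
    exact this
  have hBtm : TendstoInMeasure P B atTop
      (fun _ => variance (fun ω => (1 - (ν:ℝ) * (1 - F (X 0 ω)) ^ k - R) * X 0 ω) P) := by
    apply tendstoInMeasure_of_tendsto_ae
    · intro n
      rw [hBdef]
      exact (Measurable.const_mul (Finset.measurable_sum _ fun i _ =>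
        (hgm.pow_const 2).comp (hm i)) _).aestronglyMeasurable
    · filter_upwards [hBae] with ω hω
      have heq : ∀ n : ℕ, B n ω = (∑ i ∈ Finset.range n, (g (X i ω)) ^ 2) / n := by
        intro n
        rw [hBdef]
        ring
      simp only [heq, hσ]
      exact hω
  -- pointwise bound
  have hbound : ∀ (n : ℕ) (ω : Ω),
      |(1 / (n : ℝ)) * ∑ i ∈ Finset.range n,
          ((1 - (ν : ℝ) * ((1 / (n : ℝ)) * ∑ j ∈ Finset.range n,
            (if X i ω < X j ω then (1 : ℝ) else 0)) ^ k) * X i ω - R * X i ω) ^ 2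
        - B n ω| ^ 2 ≤ S n ω * T n ω := by
    intro n ω
    have hterm : ∀ i, |((1 - (ν:ℝ) * Fn n i ω ^ k) * X i ω - R * X i ω) ^ 2 - (g (X i ω)) ^ 2|
        ≤ K * (|D n i ω| * X i ω ^ 2) := by
      intro i
      set p := Fn n i ω with hp
      set q := 1 - F (X i ω) with hqq
      set x := X i ω with hx
      have hx0 : 0 ≤ x := hpos i ω
      have hy : ((1 - (ν:ℝ) * p ^ k) * x - R * x) = (1 - (ν:ℝ) * p ^ k - R) * x := by ring
      have hgx : g x = (1 - (ν:ℝ) * q ^ k - R) * x := rfl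
      set y := (1 - (ν:ℝ) * p ^ k - R) * x with hyy
      set z := (1 - (ν:ℝ) * q ^ k - R) * x with hzz
      have e1 : ((1 - (ν:ℝ) * p ^ k) * x - R * x) ^ 2 - (g x) ^ 2 = (y - z) * (y + z) := by
        rw [hgx, hy]; ring
      rw [e1, abs_mul]
      have hyz1 : |y - z| ≤ (ν:ℝ) * ((k:ℝ) * |p - q|) * x := by
        have : y - z = (ν:ℝ) * (q ^ k - p ^ k) * x := by rw [hyy, hzz]; ring
        rw [this, abs_mul, abs_mul, abs_of_nonneg hx0, abs_of_nonneg (by positivity : (0:ℝ) ≤ (ν:ℝ))]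
        apply mul_le_mul_of_nonneg_right _ hx0
        apply mul_le_mul_of_nonneg_left _ (by positivity)
        have h := aux_pow_abs_sub_le k (hGb (X i ω)).1 (hGb (X i ω)).2
          (hFn01 n i ω).1 (hFn01 n i ω).2
        calc |q ^ k - p ^ k| = |p ^ k - q ^ k| := abs_sub_comm _ _
          _ ≤ (k:ℝ) * |p - q| := by
              have h' := aux_pow_abs_sub_le k (hFn01 n i ω).1 (hFn01 n i ω).2
                (hGb (X i ω)).1 (hGb (X i ω)).2
              exact h'
      have hyz2 : |y + z| ≤ 2 * (1 + (ν:ℝ) + |R|) * x := by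
        have hp01 := hFn01 n i ω
        have hq01 := hGb (X i ω)
        have hpk : 0 ≤ p ^ k ∧ p ^ k ≤ 1 := ⟨pow_nonneg hp01.1 k, pow_le_one₀ hp01.1 hp01.2⟩
        have hqk : 0 ≤ q ^ k ∧ q ^ k ≤ 1 := ⟨pow_nonneg hq01.1 k, pow_le_one₀ hq01.1 hq01.2⟩
        have hν0 : (0:ℝ) ≤ ν := by positivity
        have : y + z = (2 - (ν:ℝ) * (p ^ k + q ^ k) - 2 * R) * x := by rw [hyy, hzz]; ring
        rw [this, abs_mul, abs_of_nonneg hx0]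
        apply mul_le_mul_of_nonneg_right _ hx0
        rw [abs_le]
        constructor
        · cases abs_cases R with
          | inl h => nlinarith [hpk.1, hpk.2, hqk.1, hqk.2]
          | inr h => nlinarith [hpk.1, hpk.2, hqk.1, hqk.2]
        · cases abs_cases R with
          | inl h => nlinarith [hpk.1, hpk.2, hqk.1, hqk.2]
          | inr h => nlinarith [hpk.1, hpk.2, hqk.1, hqk.2]
      have hDpq : p - q = D n i ω := by rw [hDdef, hp, hqq]
      calc |y - z| * |y + z| ≤ ((ν:ℝ) * ((k:ℝ) * |p - q|) * x) * (2 * (1 + (ν:ℝ) + |R|) * x) := by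
            apply mul_le_mul hyz1 hyz2 (abs_nonneg _)
            positivity
        _ = K * (|p - q| * x ^ 2) := by rw [hKdef]; ring
        _ = K * (|D n i ω| * X i ω ^ 2) := by rw [hDpq, hx]
    -- assemble with Cauchy-Schwarz
    have hAB : |(1 / (n : ℝ)) * ∑ i ∈ Finset.range n,
          ((1 - (ν : ℝ) * ((1 / (n : ℝ)) * ∑ j ∈ Finset.range n,
            (if X i ω < X j ω then (1 : ℝ) else 0)) ^ k) * X i ω - R * X i ω) ^ 2
        - B n ω| ≤ (1 / (n:ℝ)) * ∑ i ∈ Finset.range n, K * (|D n i ω| * X i ω ^ 2) := by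
      have hdiff : (1 / (n : ℝ)) * ∑ i ∈ Finset.range n,
            ((1 - (ν : ℝ) * ((1 / (n : ℝ)) * ∑ j ∈ Finset.range n,
              (if X i ω < X j ω then (1 : ℝ) else 0)) ^ k) * X i ω - R * X i ω) ^ 2
          - B n ω = (1 / (n:ℝ)) * ∑ i ∈ Finset.range n,
            (((1 - (ν:ℝ) * Fn n i ω ^ k) * X i ω - R * X i ω) ^ 2 - (g (X i ω)) ^ 2) := by
        have hFnrw : ∀ i : ℕ, (1 / (n : ℝ)) * ∑ j ∈ Finset.range n,
            (if X i ω < X j ω then (1:ℝ) else 0) = Fn n i ω := fun i => rfl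
        simp only [hFnrw, hBdef]
        rw [Finset.sum_sub_distrib, mul_sub]
      rw [hdiff, abs_mul, abs_of_nonneg (by positivity : (0:ℝ) ≤ 1 / (n:ℝ))]
      apply mul_le_mul_of_nonneg_left _ (by positivity)
      calc |∑ i ∈ Finset.range n,
            (((1 - (ν:ℝ) * Fn n i ω ^ k) * X i ω - R * X i ω) ^ 2 - (g (X i ω)) ^ 2)|
          ≤ ∑ i ∈ Finset.range n,
            |((1 - (ν:ℝ) * Fn n i ω ^ k) * X i ω - R * X i ω) ^ 2 - (g (X i ω)) ^ 2| :=
            Finset.abs_sum_le_sum_abs _ _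
        _ ≤ ∑ i ∈ Finset.range n, K * (|D n i ω| * X i ω ^ 2) :=
            Finset.sum_le_sum fun i _ => hterm i
    have hCS : (∑ i ∈ Finset.range n, |D n i ω| * X i ω ^ 2) ^ 2 ≤
        (∑ i ∈ Finset.range n, (D n i ω) ^ 2 * X i ω ^ 2) *
        (∑ i ∈ Finset.range n, X i ω ^ 2) := by
      have h := Finset.sum_mul_sq_le_sq_mul_sq (Finset.range n)
        (fun i => |D n i ω| * X i ω) (fun i => X i ω)
      have e1 : ∀ i, (|D n i ω| * X i ω) * X i ω = |D n i ω| * X i ω ^ 2 := fun i => by ring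
      have e2 : ∀ i, (|D n i ω| * X i ω) ^ 2 = (D n i ω) ^ 2 * X i ω ^ 2 := fun i => by
        rw [mul_pow, sq_abs]
      simp only [e1, e2] at h
      exact h
    have hABnn := abs_nonneg ((1 / (n : ℝ)) * ∑ i ∈ Finset.range n,
          ((1 - (ν : ℝ) * ((1 / (n : ℝ)) * ∑ j ∈ Finset.range n,
            (if X i ω < X j ω then (1 : ℝ) else 0)) ^ k) * X i ω - R * X i ω) ^ 2
        - B n ω)
    have hE : (1 / (n:ℝ)) * ∑ i ∈ Finset.range n, K * (|D n i ω| * X i ω ^ 2) =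
        K * ((1 / (n:ℝ)) * ∑ i ∈ Finset.range n, |D n i ω| * X i ω ^ 2) := by
      rw [← Finset.mul_sum]
      ring
    have hEnn : 0 ≤ (1 / (n:ℝ)) * ∑ i ∈ Finset.range n, K * (|D n i ω| * X i ω ^ 2) := by
      apply mul_nonneg (by positivity)
      exact Finset.sum_nonneg fun i _ => mul_nonneg hK0
        (mul_nonneg (abs_nonneg _) (sq_nonneg _))
    calc |(1 / (n : ℝ)) * ∑ i ∈ Finset.range n,
          ((1 - (ν : ℝ) * ((1 / (n : ℝ)) * ∑ j ∈ Finset.range n,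
            (if X i ω < X j ω then (1 : ℝ) else 0)) ^ k) * X i ω - R * X i ω) ^ 2
        - B n ω| ^ 2
        ≤ ((1 / (n:ℝ)) * ∑ i ∈ Finset.range n, K * (|D n i ω| * X i ω ^ 2)) ^ 2 := by
          apply pow_le_pow_left₀ hABnn hAB
      _ = K ^ 2 * ((1 / (n:ℝ)) ^ 2 * (∑ i ∈ Finset.range n, |D n i ω| * X i ω ^ 2) ^ 2) := by
          rw [hE]; ring
      _ ≤ K ^ 2 * ((1 / (n:ℝ)) ^ 2 * ((∑ i ∈ Finset.range n, (D n i ω) ^ 2 * X i ω ^ 2) *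
            (∑ i ∈ Finset.range n, X i ω ^ 2))) := by
          apply mul_le_mul_of_nonneg_left _ (sq_nonneg K)
          apply mul_le_mul_of_nonneg_left hCS (by positivity)
      _ = S n ω * T n ω := by
          rw [hSdef, hTdef]
          simp only
          ring
  exact aux_combine P _ B S T c _ hSnn hTnn hbound hStm hTtm hBtm
end
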